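/- arXiv:2601.08678 — 4 statements merged into one kernel-verified Lean document; each statement's English description precedes it below -/
import Mathlib

section
/- Let q be an odd prime power and let G = PGL_2(q), the projective general linear group of degree 2 over the field with q elements. If H and K are maximal subgroups of G such that H is isomorphic to the dihedral group of order 2(q−1) and K is isomorphic to the dihedral group of order 2(q+1), then H ∩ K is non-trivial. -/
open scoped Pointwise

/-- The projective general linear group `PGL₂(F)`. -/
abbrev PGL2 (F : Type*) [Field F] :=
  Matrix.GeneralLinearGroup (Fin 2) F ⧸
    Subgroup.center (Matrix.GeneralLinearGroup (Fin 2) F)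

section aux

variable {G : Type*} [Group G]

private lemma aux_conj_pow (g a : G) (n : ℕ) : g * a ^ n * g⁻¹ = (g * a * g⁻¹) ^ n := by
  induction n with
  | zero => simp
  | succ n ih => rw [pow_succ, pow_succ, ← ih]; group

private lemma aux_centralizer_conj (b u : G) :
    Subgroup.centralizer {b * u * b⁻¹} =
      Subgroup.map (MulAut.conj b).toMonoidHom (Subgroup.centralizer {u}) := by
  ext x
  simp only [Subgroup.mem_centralizer_singleton_iff, Subgroup.mem_map,
    MulEquiv.coe_toMonoidHom, MulAut.conj_apply]
  constructor
  · intro hx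
    refine ⟨b⁻¹ * x * b, ?_, by group⟩
    have : b * ((b⁻¹ * x * b) * u) * b⁻¹ = b * (u * (b⁻¹ * x * b)) * b⁻¹ := by
      calc b * ((b⁻¹ * x * b) * u) * b⁻¹ = x * (b * u * b⁻¹) := by group
        _ = (b * u * b⁻¹) * x := by rw [← hx]
        _ = b * (u * (b⁻¹ * x * b)) * b⁻¹ := by group
    have := congrArg (fun y => b⁻¹ * y * b) this
    simpa [mul_assoc] using this
  · rintro ⟨y, hy, rfl⟩
    calc (b * y * b⁻¹) * (b * u * b⁻¹) = b * (y * u) * b⁻¹ := by group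
      _ = b * (u * y) * b⁻¹ := by rw [hy]
      _ = (b * u * b⁻¹) * (b * y * b⁻¹) := by group

/-- From an isomorphism of a subgroup with an even dihedral group, extract a
central involution. -/
private lemma aux_central_invol (H : Subgroup G) (n : ℕ) (hn : 2 ≤ n) (he : Even n)
    (e : H ≃* DihedralGroup n) :
    ∃ z : G, z ∈ H ∧ z ≠ 1 ∧ z * z = 1 ∧ ∀ h ∈ H, h * z = z * h := by
  haveI : NeZero n := ⟨by omega⟩
  set c : ZMod n := ((n / 2 : ℕ) : ZMod n) with hc
  have h2c : c + c = 0 := by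
    have h1 : ((n / 2 + n / 2 : ℕ) : ZMod n) = ((n : ℕ) : ZMod n) := by
      congr 1
      obtain ⟨k, hk⟩ := he; omega
    rw [Nat.cast_add] at h1
    rw [hc, h1, ZMod.natCast_self]
  have hc0 : c ≠ 0 := by
    rw [hc, Ne, ZMod.natCast_eq_zero_iff]
    intro hdvd
    have := Nat.le_of_dvd (by omega) hdvd
    omega
  set zH : H := e.symm (DihedralGroup.r c) with hzH
  refine ⟨(zH : G), zH.2, ?_, ?_, ?_⟩
  · intro h1
    have : zH = (1 : H) := Subtype.ext h1
    have h2 : DihedralGroup.r c = (1 : DihedralGroup n) := by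
      have := congrArg e this
      simpa [hzH] using this
    rw [DihedralGroup.one_def] at h2
    exact hc0 (by injection h2)
  · have hr : (DihedralGroup.r c : DihedralGroup n) * DihedralGroup.r c = 1 := by
      rw [DihedralGroup.r_mul_r, h2c, DihedralGroup.one_def]
    have : zH * zH = 1 := by
      rw [hzH, ← map_mul, hr, map_one]
    exact_mod_cast congrArg (Subtype.val) this
  · intro h hh
    have key : (⟨h, hh⟩ : H) * zH = zH * ⟨h, hh⟩ := by
      apply e.injective
      rw [map_mul, map_mul, hzH, MulEquiv.apply_symm_apply]
      rcases e ⟨h, hh⟩ with j | j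
      · rw [DihedralGroup.r_mul_r, DihedralGroup.r_mul_r, add_comm]
      · rw [DihedralGroup.sr_mul_r, DihedralGroup.r_mul_sr]
        congr 1
        have : c = -c := by rw [eq_neg_iff_add_eq_zero]; exact h2c
        rw [sub_eq_add_neg, ← this]
    simpa using congrArg Subtype.val key

end aux

/-- **Proposition 2.7.** In `PGL₂(q)` with `q` odd, every maximal subgroup isomorphic to
`D_{2(q-1)}` meets every maximal subgroup isomorphic to `D_{2(q+1)}` non-trivially. -/
theorem stmt_5 (q : ℕ) (hodd : Odd q)
    (F : Type*) [Field F] [Fintype F] (hq : Fintype.card F = q)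
    (H K : Subgroup (PGL2 F)) (hH : IsCoatom H) (hK : IsCoatom K)
    (hHdih : Nonempty (H ≃* DihedralGroup (q - 1)))
    (hKdih : Nonempty (K ≃* DihedralGroup (q + 1))) :
    H ⊓ K ≠ ⊥ := by
  intro hbot
  obtain ⟨eH⟩ := hHdih
  obtain ⟨eK⟩ := hKdih
  have hq2 : 2 ≤ q := hq ▸ Fintype.one_lt_card
  have hq3 : 3 ≤ q := by obtain ⟨r, hr⟩ := hodd; omega
  obtain ⟨r, hr⟩ := hodd
  have hevH : Even (q - 1) := ⟨r, by omega⟩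
  have hevK : Even (q + 1) := ⟨r + 1, by omega⟩
  haveI : Finite (PGL2 F) := inferInstance
  -- central involutions
  obtain ⟨z, hzH, hz1, hz2, hzc⟩ := aux_central_invol H (q - 1) (by omega) hevH eH
  obtain ⟨w, hwK, hw1, hw2, hwc⟩ := aux_central_invol K (q + 1) (by omega) hevK eK
  have hzinv : z⁻¹ = z := inv_eq_of_mul_eq_one_right hz2
  have hwinv : w⁻¹ = w := inv_eq_of_mul_eq_one_right hw2
  -- cardinalities
  have cardH : Nat.card H = 2 * (q - 1) := by
    rw [Nat.card_congr eH.toEquiv, DihedralGroup.nat_card]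
  have cardK : Nat.card K = 2 * (q + 1) := by
    rw [Nat.card_congr eK.toEquiv, DihedralGroup.nat_card]
  -- product bound from trivial intersection
  have hinj : Function.Injective (fun p : H × K => (p.1 : PGL2 F) * p.2) := by
    rintro ⟨h1, k1⟩ ⟨h2, k2⟩ hp
    simp only at hp
    have hmem : ((h2⁻¹ * h1 : H) : PGL2 F) ∈ H ⊓ K := by
      constructor
      · exact (h2⁻¹ * h1).2
      · have : ((h2⁻¹ * h1 : H) : PGL2 F) = ((k2 * k1⁻¹ : K) : PGL2 F) := by
          push_cast
          have e1 : (h2 : PGL2 F) * ((↑h2)⁻¹ * ↑h1 * ↑k1) =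
              (h2 : PGL2 F) * (↑k2 * (↑k1)⁻¹ * ↑k1) := by
            calc (h2 : PGL2 F) * ((↑h2)⁻¹ * ↑h1 * ↑k1) = ↑h1 * ↑k1 := by group
              _ = ↑h2 * ↑k2 := hp
              _ = (h2 : PGL2 F) * (↑k2 * (↑k1)⁻¹ * ↑k1) := by group
          have e2 := mul_left_cancel e1
          exact mul_right_cancel e2
        rw [this]; exact (k2 * k1⁻¹).2
    rw [hbot, Subgroup.mem_bot] at hmem
    have h12 : h1 = h2 := by
      have : (h2⁻¹ * h1 : H) = 1 := Subtype.ext hmem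
      rwa [inv_mul_eq_one, eq_comm] at this
    subst h12
    have : (k1 : PGL2 F) = k2 := by
      exact mul_left_cancel hp
    exact Prod.ext rfl (Subtype.ext this)
  have hprod : Nat.card H * Nat.card K ≤ Nat.card (PGL2 F) := by
    rw [← Nat.card_prod]
    exact Nat.card_le_card_of_injective _ hinj
  -- centralizers
  set Cz := Subgroup.centralizer {z} with hCzdef
  set Cw := Subgroup.centralizer {w} with hCwdef
  have hHCz : H ≤ Cz := by
    intro x hx
    rw [hCzdef, Subgroup.mem_centralizer_singleton_iff]
    exact hzc x hx
  have hKCw : K ≤ Cw := by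
    intro x hx
    rw [hCwdef, Subgroup.mem_centralizer_singleton_iff]
    exact hwc x hx
  have hCz : Cz = H ∨ Cz = ⊤ := by
    rcases eq_or_lt_of_le hHCz with h | h
    · exact Or.inl h.symm
    · exact Or.inr (hH.2 _ h)
  have hCw : Cw = K ∨ Cw = ⊤ := by
    rcases eq_or_lt_of_le hKCw with h | h
    · exact Or.inl h.symm
    · exact Or.inr (hK.2 _ h)
  -- a nontrivial element of H ⊓ K is absurd
  have absurd_mem : ∀ x : PGL2 F, x ∈ H → x ∈ K → x = 1 := by
    intro x hx hk
    have : x ∈ H ⊓ K := ⟨hx, hk⟩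
    rwa [hbot, Subgroup.mem_bot] at this
  -- bound when a central involution is outside a coatom
  have top_bound : ∀ (L : Subgroup (PGL2 F)) (u : PGL2 F), IsCoatom L → u * u = 1 →
      (∀ x : PGL2 F, x * u = u * x) → u ∉ L → Nat.card (PGL2 F) ≤ Nat.card L * 2 := by
    intro L u hL hu2 huc huL
    have hu1 : u ≠ 1 := by rintro rfl; exact huL L.one_mem
    haveI : (Subgroup.zpowers u).Normal := by
      constructor
      intro m hm g
      have : g * m * g⁻¹ = m := by
        obtain ⟨k, rfl⟩ := Subgroup.mem_zpowers_iff.mp hm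
        have hcomm : Commute u g := (huc g).symm
        have : Commute (u ^ k) g := hcomm.zpow_left k
        rw [← this.eq]; group
      rwa [this]
    have hsup : L ⊔ Subgroup.zpowers u = ⊤ := by
      apply hL.2
      refine lt_of_le_of_ne le_sup_left ?_
      intro hEq
      exact huL (hEq ▸ Subgroup.mem_sup_right (Subgroup.mem_zpowers u))
    have hset : (↑(L ⊔ Subgroup.zpowers u) : Set (PGL2 F)) =
        (L : Set (PGL2 F)) * (Subgroup.zpowers u : Set (PGL2 F)) :=
      Subgroup.mul_normal L (Subgroup.zpowers u)
    have hord : orderOf u = 2 := orderOf_eq_prime (by rw [sq]; exact hu2) hu1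
    calc Nat.card (PGL2 F) = Nat.card (⊤ : Subgroup (PGL2 F)) :=
          (Nat.card_congr Subgroup.topEquiv.toEquiv).symm
      _ = Nat.card (↑(L ⊔ Subgroup.zpowers u) : Set (PGL2 F)) := by rw [hsup]; rfl
      _ = Nat.card ((L : Set (PGL2 F)) * (Subgroup.zpowers u : Set (PGL2 F))) := by rw [hset]
      _ ≤ Nat.card (L : Set (PGL2 F)) * Nat.card (Subgroup.zpowers u : Set (PGL2 F)) :=
          Set.natCard_mul_le
      _ = Nat.card L * Nat.card (Subgroup.zpowers u) := rfl
      _ = Nat.card L * 2 := by rw [Nat.card_zpowers, hord]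
  rcases hCz with hCzH | hCzT
  · rcases hCw with hCwK | hCwT
    · -- main case: Cz = H, Cw = K
      have hzw : z ≠ w := by
        intro h; exact hz1 (absurd_mem z hzH (h ▸ hwK))
      set a := z * w with ha
      have ha1 : a ≠ 1 := by
        intro h
        apply hzw
        rw [ha] at h
        have := eq_inv_of_mul_eq_one_left h
        rwa [hwinv] at this
      have hzaz : z * a * z⁻¹ = a⁻¹ := by
        rw [ha, hzinv, mul_inv_rev, hzinv, hwinv]
        calc z * (z * w) * z = (z * z) * (w * z) := by group
          _ = w * z := by rw [hz2, one_mul]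
      have hwaw : w * a * w⁻¹ = a⁻¹ := by
        rw [ha, hwinv, mul_inv_rev, hzinv, hwinv]
        calc w * (z * w) * w = (w * z) * (w * w) := by group
          _ = w * z := by rw [hw2, mul_one]
      set m := orderOf a with hm
      have hm0 : m ≠ 0 := (orderOf_pos a).ne'
      have hm1 : 1 < m := by
        have hne : m ≠ 1 := by
          intro h
          have h' : orderOf a = 1 := by rw [← hm]; exact h
          exact ha1 (orderOf_eq_one_iff.mp h')
        omega
      rcases Nat.even_or_odd m with hme | hmo
      · -- m even : common central element
        obtain ⟨k, hk⟩ := hme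
        have hk0 : k ≠ 0 := by omega
        set t := a ^ k with ht
        have ht2 : t * t = 1 := by
          rw [ht, ← pow_add, ← hk, hm, pow_orderOf_eq_one]
        have htinv : t⁻¹ = t := inv_eq_of_mul_eq_one_right ht2
        have ht1 : t ≠ 1 := by
          intro h
          have := orderOf_dvd_of_pow_eq_one (ht ▸ h)
          rw [← hm] at this
          have := Nat.le_of_dvd (by omega) this
          omega
        have hcz : t * z = z * t := by
          have h1 : z * t * z⁻¹ = t⁻¹ := by
            rw [ht, aux_conj_pow, hzaz, inv_pow]
          rw [htinv] at h1
          have h2 := congrArg (fun y => y * z) h1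
          simpa [mul_assoc] using h2.symm
        have hcw : t * w = w * t := by
          have h1 : w * t * w⁻¹ = t⁻¹ := by
            rw [ht, aux_conj_pow, hwaw, inv_pow]
          rw [htinv] at h1
          have h2 := congrArg (fun y => y * w) h1
          simpa [mul_assoc] using h2.symm
        have htH : t ∈ H := by
          rw [← hCzH, hCzdef, Subgroup.mem_centralizer_singleton_iff]
          exact hcz
        have htK : t ∈ K := by
          rw [← hCwK, hCwdef, Subgroup.mem_centralizer_singleton_iff]
          exact hcw
        exact ht1 (absurd_mem t htH htK)
      · -- m odd : z and w conjugate, so |H| = |K|, absurd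
        obtain ⟨k, hk⟩ := hmo
        set b := a ^ k with hb
        have hbzb : b * z * b⁻¹ = w := by
          have h1 : z * b * z⁻¹ = b⁻¹ := by
            rw [hb, aux_conj_pow, hzaz, inv_pow]
          -- from z b z⁻¹ = b⁻¹ : b * z = z * b⁻¹
          have h2 : b * z = z * b⁻¹ := by
            have : z * b = b⁻¹ * z := by
              rw [← h1]; group
            calc b * z = b * (z * b) * b⁻¹ := by group
              _ = b * (b⁻¹ * z) * b⁻¹ := by rw [this]
              _ = z * b⁻¹ := by group
          have hb2 : b * b = a⁻¹ := by
            have h3 : a * (b * b) = 1 := by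
              rw [hb, ← pow_add, ← pow_succ']
              have hkk : k + k + 1 = m := by omega
              rw [hkk, hm, pow_orderOf_eq_one]
            exact eq_inv_of_mul_eq_one_right h3
          have hbinv2 : b⁻¹ * b⁻¹ = a := by
            rw [← mul_inv_rev, hb2, inv_inv]
          calc b * z * b⁻¹ = (b * z) * b⁻¹ := by group
            _ = (z * b⁻¹) * b⁻¹ := by rw [h2]
            _ = z * (b⁻¹ * b⁻¹) := by group
            _ = z * a := by rw [hbinv2]
            _ = w := by rw [ha, ← mul_assoc, hz2, one_mul]
        have hKH : Cw = Subgroup.map (MulAut.conj b).toMonoidHom Cz := by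
          rw [hCwdef, hCzdef, ← hbzb, aux_centralizer_conj]
        have : Nat.card K = Nat.card H := by
          rw [← hCzH, ← hCwK, hKH]
          exact (Nat.card_congr
            (Cz.equivMapOfInjective _ (MulAut.conj b).injective).toEquiv).symm
        rw [cardH, cardK] at this
        omega
    · -- Cw = ⊤ : w is central, so w ∈ Cz = H, hence w ∈ H ⊓ K
      have hwH : w ∈ H := by
        rw [← hCzH, hCzdef, Subgroup.mem_centralizer_singleton_iff]
        have : z ∈ Cw := hCwT ▸ Subgroup.mem_top z
        rw [hCwdef, Subgroup.mem_centralizer_singleton_iff] at this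
        exact this.symm
      exact hw1 (absurd_mem w hwH hwK)
  · rcases hCw with hCwK | hCwT
    · -- Cz = ⊤ : z central, z ∈ Cw = K
      have hzK : z ∈ K := by
        rw [← hCwK, hCwdef, Subgroup.mem_centralizer_singleton_iff]
        have : w ∈ Cz := hCzT ▸ Subgroup.mem_top w
        rw [hCzdef, Subgroup.mem_centralizer_singleton_iff] at this
        exact this.symm
      exact hz1 (absurd_mem z hzH hzK)
    · -- both central : cardinality contradiction
      have hzcen : ∀ x : PGL2 F, x * z = z * x := by
        intro x
        have : x ∈ Cz := hCzT ▸ Subgroup.mem_top x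
        rwa [hCzdef, Subgroup.mem_centralizer_singleton_iff] at this
      by_cases hzK : z ∈ K
      · exact hz1 (absurd_mem z hzH hzK)
      · have hbound := top_bound K z hK hz2 hzcen hzK
        rw [cardK] at hbound
        rw [cardH, cardK] at hprod
        have hsub : q - 1 = 2 * r := by omega
        rw [hsub] at hprod
        have hr1 : 1 ≤ r := by omega
        nlinarith [hprod, hbound, hr1]
end

section
/- Let D = (P,𝓑) be a symmetric 2-(v,k,λ) design with λ > 1 and let G be a block-transitive automorphism group of D. Let B ∈ 𝓑 and suppose that every element of G_B that induces a non-identity permutation of B fixes at most λ points of B. Then either G_B acts faithfully on B (i.e., G_{(B)} = 1), or every non-identity element g of the pointwise stabilizer G_{(B)} has fixed-point set on P exactly equal to B. If the stronger hypothesis holds that every element of G_B inducing a non-identity permutation of B fixes at most λ − 1 points of B, then G_B acts faithfully on B. -/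
open scoped Pointwise

/-- A group action is primitive if it is transitive and every block is trivial
(this is the usual notion of a primitive permutation group). -/
def IsPrimitiveAction (G X : Type*) [Group G] [MulAction G X] : Prop :=
  MulAction.IsPretransitive G X ∧
    ∀ B : Set X, MulAction.IsBlock G B → B.Subsingleton ∨ B = Set.univ

variable {P : Type*} [Fintype P] [DecidableEq P]

/-- `𝓑` is the block set of a (non-trivial) 2-design with parameters `(v, k, lam)`
on the point set `P`. -/
structure IsDesign (𝓑 : Finset (Finset P)) (v k lam : ℕ) : Prop where
  card_points : Fintype.card P = v
  blocks_card : ∀ B ∈ 𝓑, B.card = k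
  two_lt_k : 2 < k
  k_lt_v : k < v - 1
  lam_pos : 0 < lam
  pair_blocks : ∀ x y : P, x ≠ y → (𝓑.filter fun B => x ∈ B ∧ y ∈ B).card = lam

/-- `G` is an automorphism group of the design with block set `𝓑`:
every element of `G` maps blocks to blocks. -/
def IsAutGroup (G : Subgroup (Equiv.Perm P)) (𝓑 : Finset (Finset P)) : Prop :=
  ∀ g ∈ G, ∀ B ∈ 𝓑, g • B ∈ 𝓑

/-- `G` acts transitively on the flags of the design with block set `𝓑`. -/
def IsFlagTransitive (G : Subgroup (Equiv.Perm P)) (𝓑 : Finset (Finset P)) : Prop :=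
  ∀ B₁ ∈ 𝓑, ∀ B₂ ∈ 𝓑, ∀ x₁ ∈ B₁, ∀ x₂ ∈ B₂, ∃ g ∈ G, g • x₁ = x₂ ∧ g • B₁ = B₂

/-- `G` acts transitively on the blocks of the design with block set `𝓑`. -/
def IsBlockTransitive (G : Subgroup (Equiv.Perm P)) (𝓑 : Finset (Finset P)) : Prop :=
  ∀ B₁ ∈ 𝓑, ∀ B₂ ∈ 𝓑, ∃ g ∈ G, g • B₁ = B₂

variable {𝓑 : Finset (Finset P)} {v k lam : ℕ}

lemma aux_r_mul (hD : IsDesign 𝓑 v k lam) (x : P) :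
    (𝓑.filter fun C => x ∈ C).card * (k - 1) = lam * (v - 1) := by
  have hdc : ∑ C ∈ 𝓑, ((Finset.univ.erase x).filter fun y => x ∈ C ∧ y ∈ C).card
      = ∑ y ∈ Finset.univ.erase x, (𝓑.filter fun C => x ∈ C ∧ y ∈ C).card := by
    simp_rw [Finset.card_filter]
    exact Finset.sum_comm
  have hL : ∑ C ∈ 𝓑, ((Finset.univ.erase x).filter fun y => x ∈ C ∧ y ∈ C).card
      = (𝓑.filter fun C => x ∈ C).card * (k - 1) := by
    have h1 : ∀ C ∈ 𝓑, ((Finset.univ.erase x).filter fun y => x ∈ C ∧ y ∈ C).card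
        = if x ∈ C then k - 1 else 0 := by
      intro C hC
      by_cases hx : x ∈ C
      · rw [if_pos hx]
        have : ((Finset.univ.erase x).filter fun y => x ∈ C ∧ y ∈ C) = C.erase x := by
          ext y
          simp only [Finset.mem_filter, Finset.mem_erase, Finset.mem_univ, true_and, and_true]
          tauto
        rw [this, Finset.card_erase_of_mem hx, hD.blocks_card C hC]
      · rw [if_neg hx]
        rw [Finset.card_eq_zero]
        ext y
        simp only [Finset.mem_filter, Finset.notMem_empty, iff_false]
        tauto
    rw [Finset.sum_congr rfl h1, ← Finset.sum_filter, Finset.sum_const, smul_eq_mul]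
  have hR : ∑ y ∈ Finset.univ.erase x, (𝓑.filter fun C => x ∈ C ∧ y ∈ C).card
      = lam * (v - 1) := by
    have h1 : ∀ y ∈ Finset.univ.erase x, (𝓑.filter fun C => x ∈ C ∧ y ∈ C).card = lam := by
      intro y hy
      exact hD.pair_blocks x y (Ne.symm (Finset.mem_erase.mp hy).1)
    rw [Finset.sum_congr rfl h1, Finset.sum_const, Finset.card_erase_of_mem (Finset.mem_univ x),
      Finset.card_univ, hD.card_points, smul_eq_mul, mul_comm]
  omega

lemma aux_v_pos (hD : IsDesign 𝓑 v k lam) : 4 < v := by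
  have := hD.two_lt_k; have := hD.k_lt_v; omega

lemma aux_global (hD : IsDesign 𝓑 v k lam) (hsym : 𝓑.card = v) :
    lam * (v - 1) = k * (k - 1) := by
  have hsum : ∑ x : P, (𝓑.filter fun C => x ∈ C).card = v * k := by
    have : ∑ x : P, (𝓑.filter fun C => x ∈ C).card = ∑ C ∈ 𝓑, C.card := by
      simp_rw [Finset.card_filter]
      rw [Finset.sum_comm]
      congr 1
      ext C
      rw [← Finset.card_filter]
      congr 1
      exact Finset.filter_univ_mem C
    rw [this, Finset.sum_congr rfl hD.blocks_card, Finset.sum_const, hsym, smul_eq_mul]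
  have h2 : ∑ x : P, (𝓑.filter fun C => x ∈ C).card * (k - 1) = v * (lam * (v - 1)) := by
    rw [Finset.sum_congr rfl fun x _ => aux_r_mul hD x, Finset.sum_const, Finset.card_univ,
      hD.card_points, smul_eq_mul]
  rw [← Finset.sum_mul, hsum, mul_assoc] at h2
  have hv : 0 < v := by have := aux_v_pos hD; omega
  have := Nat.eq_of_mul_eq_mul_left hv h2
  omega

lemma aux_deg (hD : IsDesign 𝓑 v k lam) (hsym : 𝓑.card = v) (x : P) :
    (𝓑.filter fun C => x ∈ C).card = k := by
  have h1 := aux_r_mul hD x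
  rw [aux_global hD hsym] at h1
  have hk : 0 < k - 1 := by have := hD.two_lt_k; omega
  exact Nat.eq_of_mul_eq_mul_right hk h1

lemma aux_lam_lt_k (hD : IsDesign 𝓑 v k lam) (hsym : 𝓑.card = v) : lam < k := by
  have h := aux_global hD hsym
  have h1 := hD.two_lt_k
  have h2 := hD.k_lt_v
  by_contra hc
  push_neg at hc
  have h3 : k * (v - 1) ≤ lam * (v - 1) := Nat.mul_le_mul_right _ hc
  rw [h] at h3
  have h4 : v - 1 ≤ k - 1 := Nat.le_of_mul_le_mul_left h3 (by omega)
  omega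

lemma aux_sum1 (hD : IsDesign 𝓑 v k lam) (hsym : 𝓑.card = v) {B₀ : Finset P} (hB₀ : B₀ ∈ 𝓑) :
    ∑ C ∈ 𝓑.erase B₀, (B₀ ∩ C).card = k * (k - 1) := by
  have h1 : ∀ C ∈ 𝓑.erase B₀, (B₀ ∩ C).card = (B₀.filter fun x => x ∈ C).card := by
    intro C _; rw [Finset.filter_mem_eq_inter]
  rw [Finset.sum_congr rfl h1]
  simp_rw [Finset.card_filter]
  rw [Finset.sum_comm]
  have h2 : ∀ x ∈ B₀, (∑ C ∈ 𝓑.erase B₀, if x ∈ C then 1 else 0) = k - 1 := by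
    intro x hx
    rw [← Finset.card_filter, Finset.filter_erase, Finset.card_erase_of_mem
      (Finset.mem_filter.mpr ⟨hB₀, hx⟩), aux_deg hD hsym x]
  rw [Finset.sum_congr rfl h2, Finset.sum_const, hD.blocks_card B₀ hB₀, smul_eq_mul]

lemma aux_sum2 (hD : IsDesign 𝓑 v k lam) (hsym : 𝓑.card = v) {B₀ : Finset P} (hB₀ : B₀ ∈ 𝓑) :
    ∑ C ∈ 𝓑.erase B₀, (B₀ ∩ C).card * ((B₀ ∩ C).card - 1) = k * (k - 1) * (lam - 1) := by
  have key : ∀ C ∈ 𝓑.erase B₀,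
      (B₀ ∩ C).card * ((B₀ ∩ C).card - 1)
        = ∑ x ∈ B₀, ∑ y ∈ B₀.erase x, if x ∈ C ∧ y ∈ C then 1 else 0 := by
    intro C _
    have h1 : ∀ x ∈ B₀, (∑ y ∈ B₀.erase x, if x ∈ C ∧ y ∈ C then 1 else 0)
        = if x ∈ C then (B₀ ∩ C).card - 1 else 0 := by
      intro x hx
      by_cases hxC : x ∈ C
      · rw [if_pos hxC]
        have : ((B₀.erase x).filter fun y => x ∈ C ∧ y ∈ C) = (B₀ ∩ C).erase x := by
          ext y
          simp only [Finset.mem_filter, Finset.mem_erase, Finset.mem_inter]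
          tauto
        rw [← Finset.card_filter, this,
          Finset.card_erase_of_mem (Finset.mem_inter.mpr ⟨hx, hxC⟩)]
      · rw [if_neg hxC]
        apply Finset.sum_eq_zero
        intro y _
        rw [if_neg (fun h => hxC h.1)]
    rw [Finset.sum_congr rfl h1, ← Finset.sum_filter, Finset.sum_const, smul_eq_mul,
      Finset.filter_mem_eq_inter, mul_comm]
  rw [Finset.sum_congr rfl key, Finset.sum_comm]
  have h2 : ∀ x ∈ B₀, (∑ C ∈ 𝓑.erase B₀, ∑ y ∈ B₀.erase x, if x ∈ C ∧ y ∈ C then 1 else 0)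
      = (k - 1) * (lam - 1) := by
    intro x hx
    rw [Finset.sum_comm]
    have h3 : ∀ y ∈ B₀.erase x, (∑ C ∈ 𝓑.erase B₀, if x ∈ C ∧ y ∈ C then 1 else 0)
        = lam - 1 := by
      intro y hy
      obtain ⟨hyx, hyB⟩ := Finset.mem_erase.mp hy
      rw [← Finset.card_filter, Finset.filter_erase, Finset.card_erase_of_mem
        (Finset.mem_filter.mpr ⟨hB₀, hx, hyB⟩), hD.pair_blocks x y (Ne.symm hyx)]
    rw [Finset.sum_congr rfl h3, Finset.sum_const, Finset.card_erase_of_mem hx,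
      hD.blocks_card B₀ hB₀, smul_eq_mul]
  rw [Finset.sum_congr rfl h2, Finset.sum_const, hD.blocks_card B₀ hB₀, smul_eq_mul, mul_assoc]

lemma cast_mul_pred (m : ℕ) : ((m * (m - 1) : ℕ) : ℤ) = (m : ℤ) * ((m : ℤ) - 1) := by
  cases m with
  | zero => simp
  | succ n => push_cast [Nat.succ_sub_one]; ring

lemma aux_inter (hD : IsDesign 𝓑 v k lam) (hsym : 𝓑.card = v) {B₀ C : Finset P}
    (hB₀ : B₀ ∈ 𝓑) (hC : C ∈ 𝓑) (hne : C ≠ B₀) : (B₀ ∩ C).card = lam := by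
  have hk : 2 < k := hD.two_lt_k
  have hl : 0 < lam := hD.lam_pos
  have hv : 4 < v := by have := hD.k_lt_v; omega
  have hglob : lam * (v - 1) = k * (k - 1) := aux_global hD hsym
  have hglobZ : (lam : ℤ) * ((v : ℤ) - 1) = (k : ℤ) * ((k : ℤ) - 1) := by
    have := congrArg (Nat.cast : ℕ → ℤ) hglob
    push_cast [Nat.cast_sub (by omega : 1 ≤ v), Nat.cast_sub (by omega : 1 ≤ k)] at this
    convert this using 2 <;> push_cast [Nat.cast_sub] <;> omega
  have h1 : ∑ C ∈ 𝓑.erase B₀, ((B₀ ∩ C).card : ℤ) = (k : ℤ) * ((k : ℤ) - 1) := by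
    have := congrArg (Nat.cast : ℕ → ℤ) (aux_sum1 hD hsym hB₀)
    push_cast at this
    rw [this]
    rw [Nat.cast_sub (by omega : 1 ≤ k)]
    push_cast; ring
  have h2 : ∑ C ∈ 𝓑.erase B₀, ((B₀ ∩ C).card : ℤ) * (((B₀ ∩ C).card : ℤ) - 1)
      = (k : ℤ) * ((k : ℤ) - 1) * ((lam : ℤ) - 1) := by
    have := congrArg (Nat.cast : ℕ → ℤ) (aux_sum2 hD hsym hB₀)
    rw [Nat.cast_sum] at this
    simp only [cast_mul_pred] at this
    push_cast at this
    rw [this, Nat.cast_sub (by omega : 1 ≤ k), Nat.cast_sub (by omega : 1 ≤ lam)]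
    push_cast; ring
  have h3 : ((𝓑.erase B₀).card : ℤ) = (v : ℤ) - 1 := by
    rw [Finset.card_erase_of_mem hB₀, hsym, Nat.cast_sub (by omega : 1 ≤ v)]; simp
  have hzero : ∑ C ∈ 𝓑.erase B₀, (((B₀ ∩ C).card : ℤ) - lam) ^ 2 = 0 := by
    have expand : ∀ C ∈ 𝓑.erase B₀, (((B₀ ∩ C).card : ℤ) - lam) ^ 2
        = ((B₀ ∩ C).card : ℤ) * (((B₀ ∩ C).card : ℤ) - 1)
          + (1 - 2 * lam) * ((B₀ ∩ C).card : ℤ) + lam ^ 2 := by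
      intro C _; ring
    rw [Finset.sum_congr rfl expand]
    rw [Finset.sum_add_distrib, Finset.sum_add_distrib, ← Finset.mul_sum, h1, h2,
      Finset.sum_const]
    rw [nsmul_eq_mul, h3]
    nlinarith [hglobZ]
  have hC' : C ∈ 𝓑.erase B₀ := Finset.mem_erase.mpr ⟨hne, hC⟩
  have := (Finset.sum_eq_zero_iff_of_nonneg (fun C _ => sq_nonneg _)).mp hzero C hC'
  have : ((B₀ ∩ C).card : ℤ) = lam := by nlinarith [this]
  exact_mod_cast this

lemma aux_fix_count (hD : IsDesign 𝓑 v k lam) (hsym : 𝓑.card = v)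
    (σ : Equiv.Perm P) (hσ : ∀ C ∈ 𝓑, σ • C ∈ 𝓑) :
    (Finset.univ.filter fun x : P => σ x = x).card
      = (𝓑.filter fun C => σ • C = C).card := by
  classical
  have hcard : Fintype.card ↥𝓑 = Fintype.card P := by
    rw [Fintype.card_coe, hsym, hD.card_points]
  let e : ↥𝓑 ≃ P := Fintype.equivOfCardEq hcard
  set Bl : P → Finset P := fun i => ((e.symm i : ↥𝓑) : Finset P) with hBl
  have hBl_mem : ∀ i, Bl i ∈ 𝓑 := fun i => (e.symm i).2
  have hBl_eq : ∀ (c : ↥𝓑), Bl (e c) = (c : Finset P) := by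
    intro c; simp [hBl]
  have hBl_inj : Function.Injective Bl := by
    intro i j h
    have : (e.symm i : ↥𝓑) = e.symm j := Subtype.ext h
    exact e.symm.injective this
  -- reindexing sums over blocks
  have hsum_reindex : ∀ f : Finset P → ℚ, ∑ i : P, f (Bl i) = ∑ C ∈ 𝓑, f C := by
    intro f
    rw [show (∑ i : P, f (Bl i)) = ∑ c : ↥𝓑, f c from Equiv.sum_comp e.symm fun c => f c,
      ← Finset.sum_attach 𝓑 f]
    rfl
  set M : Matrix P P ℚ := Matrix.of fun x i => if x ∈ Bl i then 1 else 0 with hM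
  -- Step 1: M * Mᵀ
  set A : Matrix P P ℚ := Matrix.of fun x y => if x = y then (k : ℚ) else (lam : ℚ) with hA
  have hMMt : M * M.transpose = A := by
    ext x y
    rw [Matrix.mul_apply]
    have h1 : ∀ i : P, M x i * M.transpose i y
        = if x ∈ Bl i ∧ y ∈ Bl i then (1:ℚ) else 0 := by
      intro i
      simp only [hM, Matrix.transpose_apply, Matrix.of_apply]
      split_ifs with h1 h2 h3 h4 <;> simp_all
    rw [Finset.sum_congr rfl fun i _ => h1 i]
    have h2 : (∑ i : P, if x ∈ Bl i ∧ y ∈ Bl i then (1:ℚ) else 0)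
        = ((𝓑.filter fun C => x ∈ C ∧ y ∈ C).card : ℚ) := by
      rw [hsum_reindex (fun C => if x ∈ C ∧ y ∈ C then (1:ℚ) else 0), Finset.card_filter]
      push_cast
      exact Finset.sum_congr rfl fun C _ => by split_ifs <;> simp
    rw [h2]
    by_cases hxy : x = y
    · subst hxy
      have : (𝓑.filter fun C => x ∈ C ∧ x ∈ C) = 𝓑.filter fun C => x ∈ C := by
        congr 1; ext C; tauto
      rw [this, aux_deg hD hsym x, hA]
      simp
    · rw [hD.pair_blocks x y hxy, hA]
      simp [hxy]
  -- Step 2: invertibility of A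
  have hlk := aux_lam_lt_k hD hsym
  have ha : (0:ℚ) < (k : ℚ) - lam := by
    have : (lam:ℚ) < k := by exact_mod_cast hlk
    linarith
  set t : ℚ := ((k : ℚ) - lam) + lam * Fintype.card P with ht
  have htpos : 0 < t := by
    have : (0:ℚ) ≤ (lam:ℚ) * Fintype.card P := by positivity
    rw [ht]; linarith
  set N₀ : Matrix P P ℚ := Matrix.of fun z y => (if z = y then t else 0) - lam with hN₀
  have hrow : ∀ x : P, ∑ z : P, A x z = t := by
    intro x
    have h1 : ∀ z : P, A x z = (lam : ℚ) + (if x = z then (k : ℚ) - lam else 0) := by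
      intro z
      simp only [hA, Matrix.of_apply]
      split_ifs <;> ring
    rw [Finset.sum_congr rfl fun z _ => h1 z, Finset.sum_add_distrib, Finset.sum_const,
      Finset.sum_ite_eq Finset.univ x fun _ => (k:ℚ) - lam]
    simp [ht, Finset.card_univ]
    ring
  have hAN₀ : A * N₀ = (((k:ℚ) - lam) * t) • (1 : Matrix P P ℚ) := by
    ext x y
    rw [Matrix.mul_apply]
    have h1 : ∀ z : P, A x z * N₀ z y
        = (if z = y then A x z * t else 0) - A x z * lam := by
      intro z
      simp only [hN₀, Matrix.of_apply]
      split_ifs <;> ring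
    rw [Finset.sum_congr rfl fun z _ => h1 z, Finset.sum_sub_distrib,
      Finset.sum_ite_eq' Finset.univ y fun z => A x z * t, ← Finset.sum_mul, hrow]
    simp only [Finset.mem_univ, if_true, Matrix.smul_apply, Matrix.one_apply, hA,
      Matrix.of_apply, smul_eq_mul]
    split_ifs <;> ring
  have hdetA : IsUnit A.det := by
    apply Matrix.isUnit_det_of_right_inverse (B := (((k:ℚ) - lam) * t)⁻¹ • N₀)
    rw [Matrix.mul_smul, hAN₀, smul_smul, inv_mul_cancel₀ (by positivity), one_smul]
  have hdetM : IsUnit M.det := by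
    have : M.det * M.det = A.det := by
      rw [← hMMt, Matrix.det_mul, Matrix.det_transpose]
    exact isUnit_of_mul_isUnit_left (this ▸ hdetA)
  -- Step 3: permutation matrices
  set Pm : Matrix P P ℚ := Matrix.of fun x y => if σ y = x then 1 else 0 with hPm
  set Qm : Matrix P P ℚ := Matrix.of fun i j => if σ • Bl j = Bl i then 1 else 0 with hQm
  have hPQ : Pm * M = M * Qm := by
    ext x j
    have hL : (Pm * M) x j = if σ⁻¹ x ∈ Bl j then 1 else 0 := by
      rw [Matrix.mul_apply]
      have h1 : ∀ y : P, Pm x y * M y j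
          = if y = σ⁻¹ x then (if σ⁻¹ x ∈ Bl j then (1:ℚ) else 0) else 0 := by
        intro y
        simp only [hPm, hM, Matrix.of_apply]
        by_cases hy : y = σ⁻¹ x
        · subst hy; simp
        · have : σ y ≠ x := by
            intro h; exact hy (by rw [← h]; simp)
          simp [this, hy]
          exact fun h => absurd h hy
      rw [Finset.sum_congr rfl fun y _ => h1 y, Finset.sum_ite_eq' Finset.univ (σ⁻¹ x)]
      simp
    have hR : (M * Qm) x j = if x ∈ σ • Bl j then 1 else 0 := by
      rw [Matrix.mul_apply]
      set i₀ : P := e ⟨σ • Bl j, hσ _ (hBl_mem j)⟩ with hi₀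
      have hBli₀ : Bl i₀ = σ • Bl j := by rw [hi₀, hBl_eq]
      have h1 : ∀ i : P, M x i * Qm i j
          = if i = i₀ then (if x ∈ σ • Bl j then (1:ℚ) else 0) else 0 := by
        intro i
        simp only [hM, hQm, Matrix.of_apply]
        by_cases hi : i = i₀
        · subst hi; rw [hBli₀]; simp
        · have : σ • Bl j ≠ Bl i := by
            intro h; exact hi (hBl_inj (by rw [hBli₀, h]))
          simp [this, hi]
      rw [Finset.sum_congr rfl fun i _ => h1 i, Finset.sum_ite_eq' Finset.univ i₀]
      simp
    rw [hL, hR]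
    congr 1
    simp only [eq_iff_iff]
    constructor
    · intro h
      have := Finset.smul_mem_smul_finset (a := σ) h
      simpa using this
    · intro h
      have : σ⁻¹ • x ∈ Bl j := Finset.inv_smul_mem_iff.mpr h
      simpa using this
  -- trace argument
  have hQ : Qm = M⁻¹ * (Pm * M) := by
    rw [hPQ, ← Matrix.mul_assoc, Matrix.nonsing_inv_mul M hdetM, Matrix.one_mul]
  have htr : Pm.trace = Qm.trace := by
    rw [hQ, ← Matrix.mul_assoc, Matrix.trace_mul_cycle,
      Matrix.mul_nonsing_inv M hdetM, Matrix.one_mul]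
  have htrP : Pm.trace = ((Finset.univ.filter fun x : P => σ x = x).card : ℚ) := by
    have h1 : Pm.trace = ∑ x : P, (if σ x = x then (1:ℚ) else 0) :=
      Finset.sum_congr rfl fun x _ => rfl
    rw [h1, Finset.card_filter]
    push_cast
    rfl
  have htrQ : Qm.trace = ((𝓑.filter fun C => σ • C = C).card : ℚ) := by
    have h1 : Qm.trace = ∑ C ∈ 𝓑, (if σ • C = C then (1:ℚ) else 0) := by
      rw [← hsum_reindex (fun C => if σ • C = C then (1:ℚ) else 0)]
      exact Finset.sum_congr rfl fun i _ => rfl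
    rw [h1, Finset.card_filter]
    push_cast
    rfl
  have := htr
  rw [htrP, htrQ] at this
  exact_mod_cast this

section Main
variable {G : Subgroup (Equiv.Perm P)}

lemma smul_eq_apply (g : G) (x : P) : g • x = (g : Equiv.Perm P) x := rfl

lemma smul_finset_eq (g : G) (s : Finset P) : g • s = (g : Equiv.Perm P) • s := rfl

lemma aux_transport (hbt : IsBlockTransitive G 𝓑) {B : Finset P} (hB : B ∈ 𝓑) {t : ℕ}
    (H : ∀ g : G, g • B = B → ¬ (∀ a ∈ B, g • a = a) →
      (B.filter fun a => g • a = a).card ≤ t)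
    {C : Finset P} (hC : C ∈ 𝓑) (g : G) (hgC : g • C = C)
    (hnt : ¬ (∀ a ∈ C, g • a = a)) :
    (C.filter fun a => g • a = a).card ≤ t := by
  obtain ⟨h, hhG, hhBC⟩ := hbt B hB C hC
  set h' : G := ⟨h, hhG⟩ with hh'
  have hh'B : h' • B = C := hhBC
  set g' : G := h'⁻¹ * g * h' with hg'
  have hg'B : g' • B = B := by
    rw [hg', mul_smul, mul_smul, hh'B, hgC, inv_smul_eq_iff, hh'B]
  have hfixcorr : ∀ a : P, g' • a = a ↔ g • (h' • a) = h' • a := by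
    intro a
    rw [hg', mul_smul, mul_smul]
    constructor
    · intro hfix
      have := congrArg (h' • ·) hfix
      simpa [smul_smul] using this
    · intro hfix
      rw [hfix]
      simp
  have hmemcorr : ∀ a : P, a ∈ B ↔ h' • a ∈ C := by
    intro a
    rw [← hh'B]
    exact (Finset.smul_mem_smul_finset_iff h').symm
  have hnt' : ¬ (∀ a ∈ B, g' • a = a) := by
    intro hall
    apply hnt
    intro c hc
    have hcB : h'⁻¹ • c ∈ B := by
      rw [hmemcorr]
      simpa using hc
    have := hall _ hcB
    rw [hfixcorr] at this
    simpa using this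
  have hcards : (C.filter fun a => g • a = a) = h' • (B.filter fun a => g' • a = a) := by
    ext c
    rw [← Finset.inv_smul_mem_iff, Finset.mem_filter, Finset.mem_filter,
      hfixcorr, hmemcorr (h'⁻¹ • c)]
    simp
  rw [hcards, Finset.card_smul_finset]
  exact H g' hg'B hnt'

lemma aux_exists_moved {g : G} (hg : g ≠ 1) : ∃ z : P, g • z ≠ z := by
  by_contra hall
  push_neg at hall
  apply hg
  ext x
  exact hall x

lemma aux_fix_smul {g : G} {B : Finset P} (hfix : ∀ a ∈ B, g • a = a) : g • B = B := by
  apply Finset.eq_of_subset_of_card_le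
  · intro x hx
    obtain ⟨y, hy, rfl⟩ := Finset.mem_smul_finset.mp hx
    rw [hfix y hy]
    exact hy
  · rw [Finset.card_smul_finset]

lemma core1 (hD : IsDesign 𝓑 v k lam) (hsym : 𝓑.card = v)
    (hAut : IsAutGroup G 𝓑) (hbt : IsBlockTransitive G 𝓑)
    {B : Finset P} (hB : B ∈ 𝓑)
    (H : ∀ g : G, g • B = B → ¬ (∀ a ∈ B, g • a = a) →
      (B.filter fun a => g • a = a).card ≤ lam) :
    ∀ g : G, g ≠ 1 → (∀ a ∈ B, g • a = a) → {x : P | g • x = x} = (B : Set P) := by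
  intro g hg hfix
  ext x
  simp only [Set.mem_setOf_eq, Finset.coe_mem, Finset.mem_coe]
  constructor
  · intro hx
    by_contra hxB
    obtain ⟨z, hz⟩ := aux_exists_moved hg
    have hzB : z ∉ B := fun h => hz (hfix z h)
    have hxz : x ≠ z := by rintro rfl; exact hz hx
    have hpos : 0 < (𝓑.filter fun C => x ∈ C ∧ z ∈ C).card := by
      rw [hD.pair_blocks x z hxz]; exact hD.lam_pos
    obtain ⟨C, hCmem⟩ := Finset.card_pos.mp hpos
    rw [Finset.mem_filter] at hCmem
    obtain ⟨hC, hxC, hzC⟩ := hCmem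
    have hCB : C ≠ B := fun h => hxB (h ▸ hxC)
    have hxBC : x ∉ B ∩ C := fun h => hxB (Finset.mem_inter.mp h).1
    have hScard : (insert x (B ∩ C)).card = lam + 1 := by
      rw [Finset.card_insert_of_notMem hxBC, aux_inter hD hsym hB hC hCB]
    by_cases hgC : g • C = C
    · have hnt : ¬ (∀ a ∈ C, g • a = a) := fun h => hz (h z hzC)
      have hle := aux_transport hbt hB H hC g hgC hnt
      have hsub : insert x (B ∩ C) ⊆ C.filter fun a => g • a = a := by
        intro u hu
        rw [Finset.mem_insert] at hu
        rcases hu with rfl | hu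
        · exact Finset.mem_filter.mpr ⟨hxC, hx⟩
        · obtain ⟨huB, huC⟩ := Finset.mem_inter.mp hu
          exact Finset.mem_filter.mpr ⟨huC, hfix u huB⟩
      have := Finset.card_le_card hsub
      omega
    · have hgC𝓑 : g • C ∈ 𝓑 := hAut g g.2 C hC
      have hint : (C ∩ (g • C)).card = lam :=
        aux_inter hD hsym hC hgC𝓑 (fun h => hgC h)
      have hsub : insert x (B ∩ C) ⊆ C ∩ (g • C) := by
        intro u hu
        rw [Finset.mem_insert] at hu
        have huC : u ∈ C ∧ g • u = u := by
          rcases hu with rfl | hu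
          · exact ⟨hxC, hx⟩
          · obtain ⟨huB, huC⟩ := Finset.mem_inter.mp hu
            exact ⟨huC, hfix u huB⟩
        refine Finset.mem_inter.mpr ⟨huC.1, ?_⟩
        rw [← huC.2]
        exact Finset.smul_mem_smul_finset huC.1
      have := Finset.card_le_card hsub
      omega
  · intro hxB
    exact hfix x hxB

lemma core2 (hD : IsDesign 𝓑 v k lam) (hsym : 𝓑.card = v) (hlam : 1 < lam)
    (hAut : IsAutGroup G 𝓑) (hbt : IsBlockTransitive G 𝓑)
    {B : Finset P} (hB : B ∈ 𝓑)
    (H1 : ∀ g : G, g • B = B → ¬ (∀ a ∈ B, g • a = a) →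
      (B.filter fun a => g • a = a).card ≤ lam - 1) :
    ∀ g : G, (∀ a ∈ B, g • a = a) → g = 1 := by
  intro g hfix
  by_contra hg
  have H : ∀ g : G, g • B = B → ¬ (∀ a ∈ B, g • a = a) →
      (B.filter fun a => g • a = a).card ≤ lam :=
    fun g' a b => le_trans (H1 g' a b) (Nat.sub_le lam 1)
  have hFix := core1 hD hsym hAut hbt hB H g hg hfix
  have hfilter : (Finset.univ.filter fun x : P => (g : Equiv.Perm P) x = x) = B := by
    ext x
    simp only [Finset.mem_filter, Finset.mem_univ, true_and]
    have := Set.ext_iff.mp hFix x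
    exact this
  have hσ : ∀ C ∈ 𝓑, (g : Equiv.Perm P) • C ∈ 𝓑 := fun C hC => hAut g g.2 C hC
  have hcnt := aux_fix_count hD hsym g hσ
  rw [hfilter] at hcnt
  have hBcard := hD.blocks_card B hB
  have hgB : (g : Equiv.Perm P) • B = B := aux_fix_smul hfix
  have hBmem : B ∈ 𝓑.filter fun C => (g : Equiv.Perm P) • C = C :=
    Finset.mem_filter.mpr ⟨hB, hgB⟩
  have hpos : 0 < ((𝓑.filter fun C => (g : Equiv.Perm P) • C = C).erase B).card := by
    rw [Finset.card_erase_of_mem hBmem, ← hcnt, hBcard]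
    have := hD.two_lt_k
    omega
  obtain ⟨C, hC'⟩ := Finset.card_pos.mp hpos
  rw [Finset.mem_erase, Finset.mem_filter] at hC'
  obtain ⟨hCB, hC, hgC⟩ := hC'
  have hgC' : g • C = C := hgC
  have hnt : ¬ (∀ a ∈ C, g • a = a) := by
    intro hall
    apply hCB
    apply Finset.eq_of_subset_of_card_le
    · intro c hc
      have hc2 : c ∈ {x : P | g • x = x} := hall c hc
      rw [hFix] at hc2
      exact hc2
    · rw [hBcard, hD.blocks_card C hC]
  have hle := aux_transport hbt hB H1 hC g hgC' hnt
  have hsub : B ∩ C ⊆ C.filter fun a => g • a = a := by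
    intro u hu
    obtain ⟨h1, h2⟩ := Finset.mem_inter.mp hu
    exact Finset.mem_filter.mpr ⟨h2, hfix u h1⟩
  have hint : (B ∩ C).card = lam := aux_inter hD hsym hB hC hCB
  have := Finset.card_le_card hsub
  omega

end Main


/-- **Lemma 4.2.** Let `G` be a block-transitive automorphism group of a symmetric design
with `λ > 1` and let `B` be a block. If every element of `G_B` inducing a non-identity
permutation of `B` fixes at most `λ` points of `B`, then either `G_B` is faithful on `B`
or every non-identity element of the pointwise stabilizer of `B` has fixed-point set
exactly `B`; if "at most `λ`" is strengthened to "at most `λ - 1`", then `G_B` is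
faithful on `B`. -/
theorem stmt_7 (𝓑 : Finset (Finset P)) (v k lam : ℕ)
    (hD : IsDesign 𝓑 v k lam) (hsym : 𝓑.card = v) (hlam : 1 < lam)
    (G : Subgroup (Equiv.Perm P)) (hAut : IsAutGroup G 𝓑)
    (hbt : IsBlockTransitive G 𝓑)
    (B : Finset P) (hB : B ∈ 𝓑) :
    ((∀ g : G, g • B = B → ¬ (∀ a ∈ B, g • a = a) →
        (B.filter fun a => g • a = a).card ≤ lam) →
      ((∀ g : G, (∀ a ∈ B, g • a = a) → g = 1) ∨
        (∀ g : G, g ≠ 1 → (∀ a ∈ B, g • a = a) → {x : P | g • x = x} = (B : Set P)))) ∧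
    ((∀ g : G, g • B = B → ¬ (∀ a ∈ B, g • a = a) →
        (B.filter fun a => g • a = a).card ≤ lam - 1) →
      (∀ g : G, (∀ a ∈ B, g • a = a) → g = 1)) := by
  constructor
  · intro H
    right
    exact core1 hD hsym hAut hbt hB H
  · intro H1
    exact core2 hD hsym hlam hAut hbt hB H1
end

section
/- Let D = (P,𝓑) be a symmetric 2-(v,k,λ) design with λ > 1 and let G be a block-transitive automorphism group of D. Suppose that for every block B, every element of G_B that induces a non-identity permutation of B fixes at most one point of B. If H is a subgroup of G that fixes at least two points of P, then the order |H| divides λ. -/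
open scoped Pointwise

variable {P : Type*} [Fintype P] [DecidableEq P]

-- replication count
lemma count_r {𝓑 : Finset (Finset P)} {v k lam : ℕ} (hD : IsDesign 𝓑 v k lam) (p : P) :
    (𝓑.filter fun C => p ∈ C).card * (k - 1) = lam * (v - 1) := by
  have key : ∑ C ∈ 𝓑, ∑ q ∈ Finset.univ.erase p, (if p ∈ C ∧ q ∈ C then 1 else 0)
      = ∑ q ∈ Finset.univ.erase p, ∑ C ∈ 𝓑, (if p ∈ C ∧ q ∈ C then 1 else 0) :=
    Finset.sum_comm
  have hL : ∑ C ∈ 𝓑, ∑ q ∈ Finset.univ.erase p, (if p ∈ C ∧ q ∈ C then 1 else 0)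
      = (𝓑.filter fun C => p ∈ C).card * (k - 1) := by
    have h1 : ∀ C ∈ 𝓑, (∑ q ∈ Finset.univ.erase p, if p ∈ C ∧ q ∈ C then 1 else 0)
        = if p ∈ C then k - 1 else 0 := by
      intro C hC
      by_cases hp : p ∈ C
      · simp only [hp, true_and, if_true]
        have : ((Finset.univ.erase p).filter fun q => q ∈ C) = C.erase p := by
          ext q
          simp [Finset.mem_erase, and_comm]
        rw [← Finset.card_filter, this, Finset.card_erase_of_mem hp, hD.blocks_card C hC]
      · simp [hp]
    rw [Finset.sum_congr rfl h1, ← Finset.sum_filter, Finset.sum_const, smul_eq_mul]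
  have hR : ∑ q ∈ Finset.univ.erase p, ∑ C ∈ 𝓑, (if p ∈ C ∧ q ∈ C then 1 else 0)
      = lam * (v - 1) := by
    have h1 : ∀ q ∈ Finset.univ.erase p, (∑ C ∈ 𝓑, if p ∈ C ∧ q ∈ C then 1 else 0) = lam := by
      intro q hq
      rw [← Finset.card_filter]
      exact hD.pair_blocks p q (Ne.symm (Finset.mem_erase.mp hq).1)
    rw [Finset.sum_congr rfl h1, Finset.sum_const, Finset.card_erase_of_mem (Finset.mem_univ p),
      Finset.card_univ, hD.card_points]
    simp [mul_comm]
  omega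

lemma v_big {𝓑 : Finset (Finset P)} {v k lam : ℕ} (hD : IsDesign 𝓑 v k lam) : 5 ≤ v := by
  have := hD.two_lt_k; have := hD.k_lt_v; omega

lemma r_eq_k {𝓑 : Finset (Finset P)} {v k lam : ℕ} (hD : IsDesign 𝓑 v k lam)
    (hsym : 𝓑.card = v) (p : P) : (𝓑.filter fun C => p ∈ C).card = k := by
  have hv := v_big hD
  have hk := hD.two_lt_k
  have hsum : ∑ q : P, (𝓑.filter fun C => q ∈ C).card = v * k := by
    have key : ∑ q : P, ∑ C ∈ 𝓑, (if q ∈ C then 1 else 0)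
        = ∑ C ∈ 𝓑, ∑ q : P, (if q ∈ C then 1 else 0) := Finset.sum_comm
    have hL : ∑ q : P, ∑ C ∈ 𝓑, (if q ∈ C then 1 else 0)
        = ∑ q : P, (𝓑.filter fun C => q ∈ C).card := by
      refine Finset.sum_congr rfl fun q _ => ?_
      rw [← Finset.card_filter]
    have hR : ∑ C ∈ 𝓑, ∑ q : P, (if q ∈ C then 1 else 0) = v * k := by
      have h1 : ∀ C ∈ 𝓑, (∑ q : P, if q ∈ C then 1 else 0) = k := by
        intro C hC
        rw [← Finset.card_filter]
        rw [show (Finset.univ.filter fun q => q ∈ C) = C by ext q; simp]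
        exact hD.blocks_card C hC
      rw [Finset.sum_congr rfl h1, Finset.sum_const, smul_eq_mul, hsym]
    omega
  have hconst : ∀ q : P, (𝓑.filter fun C => q ∈ C).card = (𝓑.filter fun C => p ∈ C).card := by
    intro q
    have h1 := count_r hD p
    have h2 := count_r hD q
    have : (𝓑.filter fun C => q ∈ C).card * (k-1) = (𝓑.filter fun C => p ∈ C).card * (k-1) := by
      omega
    exact Nat.eq_of_mul_eq_mul_right (by omega) this
  rw [Finset.sum_congr rfl (fun q _ => hconst q), Finset.sum_const, Finset.card_univ,
    hD.card_points, smul_eq_mul] at hsum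
  exact Nat.eq_of_mul_eq_mul_left (by omega) hsum

lemma lam_id {𝓑 : Finset (Finset P)} {v k lam : ℕ} (hD : IsDesign 𝓑 v k lam)
    (hsym : 𝓑.card = v) : lam * (v - 1) = k * (k - 1) := by
  have hv := v_big hD
  have hp : 0 < Fintype.card P := by rw [hD.card_points]; omega
  obtain ⟨p⟩ := Fintype.card_pos_iff.mp hp
  calc lam * (v-1) = (𝓑.filter fun C => p ∈ C).card * (k - 1) := (count_r hD p).symm
    _ = k * (k - 1) := by rw [r_eq_k hD hsym p]

lemma inter_card {𝓑 : Finset (Finset P)} {v k lam : ℕ} (hD : IsDesign 𝓑 v k lam)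
    (hsym : 𝓑.card = v) {B C : Finset P} (hB : B ∈ 𝓑) (hC : C ∈ 𝓑) (hne : C ≠ B) :
    (B ∩ C).card = lam := by
  classical
  set s := 𝓑.erase B with hs
  have hv := v_big hD
  have hk := hD.two_lt_k
  have hlp := hD.lam_pos
  have hcards : s.card = v - 1 := by rw [hs, Finset.card_erase_of_mem hB, hsym]
  have S1 : ∑ D ∈ s, (B ∩ D).card = k * (k - 1) := by
    have key : ∑ D ∈ s, ∑ p ∈ B, (if p ∈ D then 1 else 0)
        = ∑ p ∈ B, ∑ D ∈ s, (if p ∈ D then 1 else 0) := Finset.sum_comm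
    have hL : ∀ D ∈ s, (∑ p ∈ B, if p ∈ D then 1 else 0) = (B ∩ D).card := by
      intro D _
      rw [← Finset.card_filter, Finset.filter_mem_eq_inter]
    have hR : ∀ p ∈ B, (∑ D ∈ s, if p ∈ D then 1 else 0) = k - 1 := by
      intro p hp
      rw [← Finset.card_filter, hs, Finset.filter_erase,
        Finset.card_erase_of_mem (Finset.mem_filter.mpr ⟨hB, hp⟩), r_eq_k hD hsym p]
    rw [← Finset.sum_congr rfl hL, key, Finset.sum_congr rfl hR, Finset.sum_const,
      smul_eq_mul, hD.blocks_card B hB]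
  have S2 : ∑ D ∈ s, (B ∩ D).card * ((B ∩ D).card - 1) = k * (k - 1) * (lam - 1) := by
    have hL : ∀ D ∈ s, (∑ p ∈ B, ∑ q ∈ B.erase p, if p ∈ D ∧ q ∈ D then 1 else 0)
        = (B ∩ D).card * ((B ∩ D).card - 1) := by
      intro D _
      have h1 : ∀ p ∈ B, (∑ q ∈ B.erase p, if p ∈ D ∧ q ∈ D then 1 else 0)
          = if p ∈ D then (B ∩ D).card - 1 else 0 := by
        intro p hp
        by_cases hpD : p ∈ D
        · simp only [hpD, true_and, if_true]
          rw [← Finset.card_filter, Finset.filter_erase, Finset.filter_mem_eq_inter,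
            Finset.card_erase_of_mem (Finset.mem_inter.mpr ⟨hp, hpD⟩)]
        · simp [hpD]
      rw [Finset.sum_congr rfl h1, ← Finset.sum_filter, Finset.filter_mem_eq_inter,
        Finset.sum_const, smul_eq_mul]
    have key : ∑ D ∈ s, ∑ p ∈ B, ∑ q ∈ B.erase p, (if p ∈ D ∧ q ∈ D then 1 else 0)
        = ∑ p ∈ B, ∑ q ∈ B.erase p, ∑ D ∈ s, (if p ∈ D ∧ q ∈ D then 1 else 0) := by
      rw [Finset.sum_comm]
      exact Finset.sum_congr rfl fun p _ => Finset.sum_comm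
    have hR : ∀ p ∈ B, (∑ q ∈ B.erase p, ∑ D ∈ s, if p ∈ D ∧ q ∈ D then 1 else 0)
        = (k - 1) * (lam - 1) := by
      intro p hp
      have h2 : ∀ q ∈ B.erase p, (∑ D ∈ s, if p ∈ D ∧ q ∈ D then 1 else 0) = lam - 1 := by
        intro q hq
        rw [← Finset.card_filter, hs, Finset.filter_erase,
          Finset.card_erase_of_mem
            (Finset.mem_filter.mpr ⟨hB, hp, Finset.mem_of_mem_erase hq⟩),
          hD.pair_blocks p q (Ne.symm (Finset.mem_erase.mp hq).1)]
      rw [Finset.sum_congr rfl h2, Finset.sum_const, smul_eq_mul,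
        Finset.card_erase_of_mem hp, hD.blocks_card B hB]
    rw [← Finset.sum_congr rfl hL, key, Finset.sum_congr rfl hR, Finset.sum_const,
      smul_eq_mul, hD.blocks_card B hB, mul_assoc]
  -- pass to ℤ and do the variance argument
  have hid : (lam : ℤ) * ((v : ℤ) - 1) = (k : ℤ) * ((k : ℤ) - 1) := by
    have := lam_id hD hsym
    zify [show 1 ≤ v by omega, show 1 ≤ k by omega] at this
    exact this
  have castmul : ∀ a : ℕ, ((a * (a - 1) : ℕ) : ℤ) = (a : ℤ) * ((a : ℤ) - 1) := by
    intro a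
    rcases Nat.eq_zero_or_pos a with rfl | ha
    · simp
    · push_cast [Nat.cast_sub ha]; ring
  have S1' : ∑ D ∈ s, ((B ∩ D).card : ℤ) = (k : ℤ) * ((k : ℤ) - 1) := by
    rw [← Nat.cast_sum]
    rw [S1]
    exact castmul k
  have S2' : ∑ D ∈ s, ((B ∩ D).card : ℤ) * (((B ∩ D).card : ℤ) - 1)
      = (k : ℤ) * ((k : ℤ) - 1) * ((lam : ℤ) - 1) := by
    have : ∑ D ∈ s, ((B ∩ D).card : ℤ) * (((B ∩ D).card : ℤ) - 1)
        = ((∑ D ∈ s, (B ∩ D).card * ((B ∩ D).card - 1) : ℕ) : ℤ) := by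
      rw [Nat.cast_sum]
      exact Finset.sum_congr rfl fun D _ => (castmul _).symm
    rw [this, S2]
    push_cast [Nat.cast_sub (by omega : 1 ≤ lam), Nat.cast_sub (by omega : 1 ≤ k)]
    ring
  have hz : ∑ D ∈ s, (((B ∩ D).card : ℤ) - (lam : ℤ)) ^ 2 = 0 := by
    have expand : ∀ D ∈ s, (((B ∩ D).card : ℤ) - (lam : ℤ)) ^ 2
        = ((B ∩ D).card : ℤ) * (((B ∩ D).card : ℤ) - 1)
          + (1 - 2 * (lam : ℤ)) * ((B ∩ D).card : ℤ) + (lam : ℤ) ^ 2 := by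
      intro D _; ring
    rw [Finset.sum_congr rfl expand, Finset.sum_add_distrib, Finset.sum_add_distrib,
      ← Finset.mul_sum, Finset.sum_const, nsmul_eq_mul, S1', S2', hcards]
    have hvc : ((v - 1 : ℕ) : ℤ) = (v : ℤ) - 1 := by
      push_cast [Nat.cast_sub (by omega : 1 ≤ v)]; ring
    rw [hvc]
    linear_combination ((lam : ℤ)) * hid
  have hCs : C ∈ s := Finset.mem_erase.mpr ⟨hne, hC⟩
  have := (Finset.sum_eq_zero_iff_of_nonneg fun D _ => sq_nonneg _).mp hz C hCs
  have h0 : ((B ∩ C).card : ℤ) = (lam : ℤ) := by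
    have := pow_eq_zero_iff (n := 2) (by norm_num) |>.mp this
    linarith [this]
  exact_mod_cast h0

lemma faithful {𝓑 : Finset (Finset P)} {v k lam : ℕ} (hD : IsDesign 𝓑 v k lam)
    (hsym : 𝓑.card = v) (hlam : 1 < lam)
    {G : Subgroup (Equiv.Perm P)} (hAut : IsAutGroup G 𝓑)
    (hfix : ∀ B ∈ 𝓑, ∀ g : G, g • B = B → ¬ (∀ a ∈ B, g • a = a) →
      (B.filter fun a => g • a = a).card ≤ 1)
    (g : G) {B : Finset P} (hB : B ∈ 𝓑) (hgB : g • B = B)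
    (hptw : ∀ a ∈ B, g • a = a) (z : P) : g • z = z := by
  by_contra hz
  have hzB : z ∉ B := fun h => hz (hptw z h)
  have hgzB : g • z ∉ B := by
    intro h
    exact hz (smul_left_cancel g (hptw _ h))
  have hne : z ≠ g • z := fun e => hz e.symm
  have hpos : 0 < (𝓑.filter fun D => z ∈ D ∧ g • z ∈ D).card := by
    rw [hD.pair_blocks z (g • z) hne]; exact hD.lam_pos
  obtain ⟨D, hDmem⟩ := Finset.card_pos.mp hpos
  rw [Finset.mem_filter] at hDmem
  obtain ⟨hD𝓑, hzD, hgzD⟩ := hDmem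
  have hDB : D ≠ B := fun e => hzB (e ▸ hzD)
  by_cases hgD : g • D = D
  · have hsub : B ∩ D ⊆ D.filter fun a => g • a = a := by
      intro a ha
      obtain ⟨h1, h2⟩ := Finset.mem_inter.mp ha
      exact Finset.mem_filter.mpr ⟨h2, hptw a h1⟩
    have hcard2 : 2 ≤ (D.filter fun a => g • a = a).card := by
      have h1 : lam ≤ (D.filter fun a => g • a = a).card := by
        rw [← inter_card hD hsym hB hD𝓑 hDB]
        exact Finset.card_le_card hsub
      omega
    have hall : ∀ a ∈ D, g • a = a := by
      by_contra hnot
      have := hfix D hD𝓑 g hgD hnot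
      omega
    exact hz (hall z hzD)
  · have hgD𝓑 : g • D ∈ 𝓑 := hAut (g : Equiv.Perm P) g.2 D hD𝓑
    have hint : (D ∩ g • D).card = lam := inter_card hD hsym hD𝓑 hgD𝓑 hgD
    have hsub : insert (g • z) (B ∩ D) ⊆ D ∩ g • D := by
      intro a ha
      rcases Finset.mem_insert.mp ha with rfl | ha
      · exact Finset.mem_inter.mpr ⟨hgzD, Finset.smul_mem_smul_finset hzD⟩
      · obtain ⟨haB, haD⟩ := Finset.mem_inter.mp ha
        refine Finset.mem_inter.mpr ⟨haD, ?_⟩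
        have h3 : g • a ∈ g • D := Finset.smul_mem_smul_finset haD
        rwa [hptw a haB] at h3
    have hc1 : (insert (g • z) (B ∩ D)).card = lam + 1 := by
      rw [Finset.card_insert_of_notMem (fun h => hgzB (Finset.mem_inter.mp h).1),
        inter_card hD hsym hB hD𝓑 hDB]
    have hle := Finset.card_le_card hsub
    rw [hc1, hint] at hle
    omega

lemma free_action_dvd {K : Type*} [Group K] [Fintype K] {α : Type*} [DecidableEq α]
    [MulAction K α] :
    ∀ (T : Finset α), (∀ (g : K), ∀ a ∈ T, g • a ∈ T) →
      (∀ (g : K), ∀ a ∈ T, g • a = a → g = 1) → Fintype.card K ∣ T.card := by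
  intro T
  induction T using Finset.strongInduction with
  | _ T ih =>
    intro hinv hfree
    rcases T.eq_empty_or_nonempty with rfl | ⟨a, ha⟩
    · simp
    · set O : Finset α := Finset.univ.image (fun g : K => g • a) with hO
      have hinj : Function.Injective (fun g : K => g • a) := by
        intro g₁ g₂ h
        have h1 : (g₂⁻¹ * g₁) • a = a := by
          simp only at h
          rw [mul_smul, h]
          exact inv_smul_smul g₂ a
        have h2 := hfree _ a ha h1
        exact (inv_mul_eq_one.mp h2).symm
      have hOcard : O.card = Fintype.card K := by
        rw [hO, Finset.card_image_of_injective _ hinj, Finset.card_univ]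
      have hOsub : O ⊆ T := by
        intro b hb
        obtain ⟨g, _, rfl⟩ := Finset.mem_image.mp hb
        exact hinv g a ha
      have haO : a ∈ O := Finset.mem_image.mpr ⟨1, Finset.mem_univ 1, one_smul K a⟩
      have hss : T \ O ⊂ T := Finset.sdiff_ssubset hOsub ⟨a, haO⟩
      have hinv' : ∀ (g : K), ∀ b ∈ T \ O, g • b ∈ T \ O := by
        intro g b hb
        obtain ⟨hbT, hbO⟩ := Finset.mem_sdiff.mp hb
        refine Finset.mem_sdiff.mpr ⟨hinv g b hbT, fun hgb => hbO ?_⟩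
        obtain ⟨g', _, hg'⟩ := Finset.mem_image.mp hgb
        refine Finset.mem_image.mpr ⟨g⁻¹ * g', Finset.mem_univ _, ?_⟩
        rw [mul_smul, hg']
        exact inv_smul_smul g b
      have hfree' : ∀ (g : K), ∀ b ∈ T \ O, g • b = b → g = 1 :=
        fun g b hb => hfree g b (Finset.mem_sdiff.mp hb).1
      have hdvd := ih (T \ O) hss hinv' hfree'
      have hsplit : T.card = (T \ O).card + O.card := by
        have := Finset.card_le_card hOsub
        rw [Finset.card_sdiff_of_subset hOsub]
        omega
      rw [hsplit, hOcard]
      exact Nat.dvd_add hdvd (dvd_refl _)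


/-- **Lemma 4.4.** Let `G` be a block-transitive automorphism group of a symmetric design
with `λ > 1` such that for every block `B` every element of `G_B` inducing a non-identity
permutation of `B` fixes at most one point of `B`. If a subgroup `H` of `G` fixes at
least two points, then `|H|` divides `λ`. -/
theorem stmt_9 (𝓑 : Finset (Finset P)) (v k lam : ℕ)
    (hD : IsDesign 𝓑 v k lam) (hsym : 𝓑.card = v) (hlam : 1 < lam)
    (G : Subgroup (Equiv.Perm P)) (hAut : IsAutGroup G 𝓑)
    (hbt : IsBlockTransitive G 𝓑)
    (hfix : ∀ B ∈ 𝓑, ∀ g : G, g • B = B → ¬ (∀ a ∈ B, g • a = a) →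
      (B.filter fun a => g • a = a).card ≤ 1)
    (H : Subgroup G) (x y : P) (hxy : x ≠ y)
    (hx : ∀ h ∈ H, h • x = x) (hy : ∀ h ∈ H, h • y = y) :
    Nat.card H ∣ lam := by
  classical
  set S := 𝓑.filter fun B => x ∈ B ∧ y ∈ B with hSdef
  have hS : S.card = lam := hD.pair_blocks x y hxy
  haveI : Fintype H := Fintype.ofFinite _
  have hinv : ∀ (h : H), ∀ B ∈ S, h • B ∈ S := by
    intro h B hB
    rw [hSdef, Finset.mem_filter] at hB ⊢
    obtain ⟨hB𝓑, hxB, hyB⟩ := hB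
    refine ⟨hAut ((h : G) : Equiv.Perm P) (h : G).2 B hB𝓑, ?_, ?_⟩
    · have h1 : (h : G) • x ∈ (h : G) • B := Finset.smul_mem_smul_finset hxB
      rwa [hx (h : G) h.2] at h1
    · have h1 : (h : G) • y ∈ (h : G) • B := Finset.smul_mem_smul_finset hyB
      rwa [hy (h : G) h.2] at h1
  have hfree : ∀ (h : H), ∀ B ∈ S, h • B = B → h = 1 := by
    intro h B hBS hfixB
    rw [hSdef, Finset.mem_filter] at hBS
    obtain ⟨hB𝓑, hxB, hyB⟩ := hBS
    have hfixB' : (h : G) • B = B := hfixB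
    have hcard2 : 2 ≤ (B.filter fun a => (h : G) • a = a).card := by
      have hsub : ({x, y} : Finset P) ⊆ B.filter fun a => (h : G) • a = a := by
        intro a ha
        rcases Finset.mem_insert.mp ha with rfl | ha
        · exact Finset.mem_filter.mpr ⟨hxB, hx (h : G) h.2⟩
        · rw [Finset.mem_singleton] at ha
          subst ha
          exact Finset.mem_filter.mpr ⟨hyB, hy (h : G) h.2⟩
      calc 2 = ({x, y} : Finset P).card := (Finset.card_pair hxy).symm
        _ ≤ _ := Finset.card_le_card hsub
    have hptw : ∀ a ∈ B, (h : G) • a = a := by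
      by_contra hnot
      have := hfix B hB𝓑 (h : G) hfixB' hnot
      omega
    have hall := faithful hD hsym hlam hAut hfix (h : G) hB𝓑 hfixB' hptw
    have hG1 : (h : G) = 1 := by
      apply Subtype.ext
      apply Equiv.ext
      intro p
      exact hall p
    exact Subtype.ext hG1
  have hdvd := free_action_dvd (K := H) S hinv hfree
  rw [hS] at hdvd
  rwa [Nat.card_eq_fintype_card]
end

section
/- Let D = (P,𝓑) be a symmetric 2-(v,k,λ) design and let G be a flag-transitive automorphism group of D. If for a block B the induced permutation group G_B^B is abelian, then G_B acts faithfully on B (the pointwise stabilizer G_{(B)} is trivial), and there exists a point x ∈ P∖B such that G_B = G_x. -/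
open scoped Pointwise

variable {P : Type*} [Fintype P] [DecidableEq P]

namespace DesignAux

variable {𝓑 : Finset (Finset P)} {v k lam : ℕ}

lemma v_ge (hD : IsDesign 𝓑 v k lam) : k + 2 ≤ v := by
  have h := hD.k_lt_v
  omega

lemma r_mul (hD : IsDesign 𝓑 v k lam) (x : P) :
    (𝓑.filter fun C => x ∈ C).card * (k - 1) = (v - 1) * lam := by
  have key : ∑ C ∈ 𝓑, ∑ y ∈ Finset.univ.erase x, (if x ∈ C ∧ y ∈ C then 1 else 0)
      = ∑ y ∈ Finset.univ.erase x, ∑ C ∈ 𝓑, (if x ∈ C ∧ y ∈ C then 1 else 0) :=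
    Finset.sum_comm
  have lhs : ∑ C ∈ 𝓑, ∑ y ∈ Finset.univ.erase x, (if x ∈ C ∧ y ∈ C then 1 else 0)
      = (𝓑.filter fun C => x ∈ C).card * (k - 1) := by
    have hCeq : ∀ C ∈ 𝓑, (∑ y ∈ Finset.univ.erase x, (if x ∈ C ∧ y ∈ C then 1 else 0))
        = if x ∈ C then (k-1) else 0 := by
      intro C hC
      by_cases hx : x ∈ C
      · simp only [hx, true_and, if_true]
        have : ((Finset.univ.erase x).filter fun y => y ∈ C) = C.erase x := by
          ext y
          simp [Finset.mem_erase, Finset.mem_filter, and_comm]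
        rw [← Finset.card_filter, this, Finset.card_erase_of_mem hx, hD.blocks_card C hC]
      · simp [hx]
    rw [Finset.sum_congr rfl hCeq, ← Finset.sum_filter, Finset.sum_const, smul_eq_mul]
  have rhs : ∑ y ∈ Finset.univ.erase x, ∑ C ∈ 𝓑, (if x ∈ C ∧ y ∈ C then 1 else 0)
      = (v - 1) * lam := by
    have : ∀ y ∈ Finset.univ.erase x, (∑ C ∈ 𝓑, (if x ∈ C ∧ y ∈ C then 1 else 0)) = lam := by
      intro y hy
      have hyx : y ≠ x := (Finset.mem_erase.mp hy).1
      rw [← Finset.card_filter]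
      exact hD.pair_blocks x y (Ne.symm hyx)
    rw [Finset.sum_congr rfl this, Finset.sum_const, smul_eq_mul]
    rw [Finset.card_erase_of_mem (Finset.mem_univ x), Finset.card_univ, hD.card_points]
  rw [← lhs, key, rhs]

lemma lam_eq (hD : IsDesign 𝓑 v k lam) (hsym : 𝓑.card = v) : (v - 1) * lam = k * (k - 1) := by
  -- total incidence count
  have tot : ∑ x : P, (𝓑.filter fun C => x ∈ C).card = v * k := by
    have : ∑ x : P, (𝓑.filter fun C => x ∈ C).card
        = ∑ x : P, ∑ C ∈ 𝓑, (if x ∈ C then 1 else 0) := by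
      refine Finset.sum_congr rfl fun x _ => ?_
      rw [Finset.card_filter]
    rw [this, Finset.sum_comm]
    have : ∀ C ∈ 𝓑, (∑ x : P, (if x ∈ C then 1 else 0)) = k := by
      intro C hC
      rw [← Finset.card_filter, Finset.filter_mem_eq_inter, Finset.univ_inter,
        hD.blocks_card C hC]
    rw [Finset.sum_congr rfl this, Finset.sum_const, smul_eq_mul, hsym]
  -- multiply tot by (k-1)
  have h1 : v * k * (k - 1) = v * ((v-1) * lam) := by
    calc v * k * (k-1) = ∑ x : P, (𝓑.filter fun C => x ∈ C).card * (k-1) := by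
          rw [← Finset.sum_mul, tot]
      _ = ∑ x : P, (v-1)*lam := Finset.sum_congr rfl fun x _ => r_mul hD x
      _ = v * ((v-1)*lam) := by rw [Finset.sum_const, smul_eq_mul, Finset.card_univ, hD.card_points]
  have hv : 0 < v := by have := v_ge hD; omega
  have := Nat.eq_of_mul_eq_mul_left hv (by linarith [h1] : v * (k * (k-1)) = v * ((v-1)*lam))
  omega

lemma r_eq (hD : IsDesign 𝓑 v k lam) (hsym : 𝓑.card = v) (x : P) :
    (𝓑.filter fun C => x ∈ C).card = k := by
  have h1 := r_mul hD x
  have h2 := lam_eq hD hsym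
  have hk : 0 < k - 1 := by have := hD.two_lt_k; omega
  have : (𝓑.filter fun C => x ∈ C).card * (k-1) = k * (k-1) := by omega
  exact Nat.eq_of_mul_eq_mul_right hk this

lemma lam_lt_k (hD : IsDesign 𝓑 v k lam) (hsym : 𝓑.card = v) : lam < k := by
  have h := lam_eq hD hsym
  have h2 := hD.k_lt_v
  have h3 := hD.two_lt_k
  by_contra hc
  push_neg at hc
  have h4 : (v-1) * lam ≥ (v-1) * k := Nat.mul_le_mul_left _ hc
  have h5 : k * (k-1) < (v-1) * k := by
    have hb : k - 1 < v - 1 := by omega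
    calc k * (k-1) = (k-1) * k := mul_comm _ _
      _ < (v-1) * k := (Nat.mul_lt_mul_right (by omega : 0 < k)).mpr hb
  omega


lemma matrix_key (hD : IsDesign 𝓑 v k lam) (hsym : 𝓑.card = v) :
    (∀ C ∈ 𝓑, ∀ C' ∈ 𝓑, C ≠ C' → (C ∩ C').card = lam) ∧
    (∀ g : Equiv.Perm P, (∀ C ∈ 𝓑, g • C ∈ 𝓑) →
      (Finset.univ.filter fun x => g x = x).card = (𝓑.filter fun C => g • C = C).card) := by
  classical
  have hcard : Fintype.card {C // C ∈ 𝓑} = Fintype.card P := by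
    rw [Fintype.card_coe, hsym, hD.card_points]
  set e : {C // C ∈ 𝓑} ≃ P := Fintype.equivOfCardEq hcard with he
  set M : Matrix P P ℚ := Matrix.of fun x y => if x ∈ (e.symm y : Finset P) then 1 else 0 with hM
  set J : Matrix P P ℚ := Matrix.of fun _ _ => 1 with hJ
  set c : ℚ := (k : ℚ) - lam with hc
  have hcpos : 0 < c := by
    rw [hc]; rw [sub_pos]; exact_mod_cast lam_lt_k hD hsym
  set A : Matrix P P ℚ := c • (1 : Matrix P P ℚ) + (lam : ℚ) • J with hA
  -- counting helper: sum over P-indexed columns = sum over blocks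
  have colsum : ∀ f : Finset P → ℚ, ∑ y : P, f (e.symm y : Finset P) = ∑ C ∈ 𝓑, f C := by
    intro f
    rw [Equiv.sum_comp e.symm (fun c : {C // C ∈ 𝓑} => f (c : Finset P))]
    exact Finset.sum_coe_sort 𝓑 f
  have hMMt : M * M.transpose = A := by
    ext x x'
    simp only [Matrix.mul_apply, hM, Matrix.transpose_apply, Matrix.of_apply]
    rw [colsum (fun C => (if x ∈ C then (1:ℚ) else 0) * (if x' ∈ C then (1:ℚ) else 0))]
    have : ∀ C ∈ 𝓑, (if x ∈ C then (1:ℚ) else 0) * (if x' ∈ C then (1:ℚ) else 0)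
        = if x ∈ C ∧ x' ∈ C then (1:ℚ) else 0 := by
      intro C _; split_ifs with h1 h2 h3 <;> simp_all
    rw [Finset.sum_congr rfl this, Finset.sum_boole]
    by_cases hxx : x = x'
    · subst hxx
      simp only [and_self, hA, Matrix.add_apply, Matrix.smul_apply, Matrix.one_apply_eq,
        smul_eq_mul, mul_one, hJ, Matrix.of_apply, if_pos rfl]
      have : (𝓑.filter fun C => x ∈ C).card = k := r_eq hD hsym x
      rw [this, hc]; push_cast; ring
    · rw [hD.pair_blocks x x' hxx]
      simp only [hA, Matrix.add_apply, Matrix.smul_apply, Matrix.one_apply_ne hxx,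
        smul_eq_mul, mul_zero, hJ, Matrix.of_apply, mul_one, zero_add]
  have hJM : J * M = (k:ℚ) • J := by
    ext x y
    simp only [Matrix.mul_apply, hJ, hM, Matrix.of_apply, Matrix.smul_apply, smul_eq_mul, mul_one,
      one_mul]
    rw [Finset.sum_boole]
    have : (Finset.univ.filter fun z => z ∈ (e.symm y : Finset P)) = (e.symm y : Finset P) := by
      simp [Finset.filter_mem_eq_inter]
    rw [this, hD.blocks_card _ (e.symm y).2]
  have hMJ : M * J = (k:ℚ) • J := by
    ext x y
    simp only [Matrix.mul_apply, hJ, hM, Matrix.of_apply, Matrix.smul_apply, smul_eq_mul, mul_one,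
      one_mul]
    rw [colsum (fun C => if x ∈ C then (1:ℚ) else 0), Finset.sum_boole, r_eq hD hsym x]
  have hJJ : J * J = (v:ℚ) • J := by
    ext x y
    simp only [Matrix.mul_apply, hJ, Matrix.of_apply, Matrix.smul_apply, smul_eq_mul, mul_one,
      one_mul]
    rw [Finset.sum_const, Finset.card_univ, hD.card_points, nsmul_eq_mul, mul_one]
  -- A is invertible
  have hc2 : c + (lam:ℚ) * v ≠ 0 := by
    have : (0:ℚ) ≤ (lam:ℚ) * v := by positivity
    linarith
  set X : Matrix P P ℚ := c⁻¹ • (1 : Matrix P P ℚ)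
      - ((lam:ℚ)/(c*(c + lam * v))) • J with hX
  have hAX : A * X = 1 := by
    rw [hA, hX]
    rw [Matrix.add_mul, Matrix.smul_mul, Matrix.smul_mul, Matrix.mul_sub, Matrix.mul_sub,
      Matrix.mul_smul, Matrix.mul_smul, Matrix.mul_smul, Matrix.mul_smul,
      Matrix.mul_one, Matrix.one_mul, hJJ]
    rw [smul_sub, smul_sub, smul_smul, smul_smul, smul_smul, smul_smul, smul_smul]
    have h1 : c * c⁻¹ = 1 := mul_inv_cancel₀ (ne_of_gt hcpos)
    rw [h1, one_smul]
    rw [Matrix.mul_one]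
    have h2 : ((lam:ℚ) * c⁻¹) • J - ((lam:ℚ) * ((lam:ℚ) / (c * (c + (lam:ℚ) * v))) * v) • J
        = (c * ((lam:ℚ) / (c * (c + (lam:ℚ) * v)))) • J := by
      rw [← sub_smul]
      congr 1
      field_simp
      ring
    rw [h2]
    abel
  have hXA : X * A = 1 := mul_eq_one_comm.mp hAX
  have hdetA : IsUnit A.det := by
    have : A.det * X.det = 1 := by rw [← Matrix.det_mul, hAX, Matrix.det_one]
    exact IsUnit.of_mul_eq_one _ this
  have hdetM : IsUnit M.det := by
    have h1 : M.det * M.det = A.det := by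
      rw [← hMMt, Matrix.det_mul, Matrix.det_transpose]
    rw [isUnit_iff_ne_zero]
    intro h0
    rw [h0, mul_zero] at h1
    rw [← h1] at hdetA
    simp at hdetA
  haveI : Invertible M := M.invertibleOfIsUnitDet hdetM
  have hAM : A * M = M * A := by
    rw [hA, Matrix.add_mul, Matrix.mul_add, Matrix.smul_mul, Matrix.mul_smul,
      Matrix.smul_mul, Matrix.mul_smul, Matrix.one_mul, Matrix.mul_one, hJM, hMJ]
  have hMtM : M.transpose * M = A := by
    have hT : M.transpose = ⅟M * A := by
      rw [← hMMt, ← Matrix.mul_assoc, invOf_mul_self, Matrix.one_mul]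
    rw [hT, Matrix.mul_assoc, hAM, ← Matrix.mul_assoc, invOf_mul_self, Matrix.one_mul]
  constructor
  · -- intersection numbers
    intro C hC C' hC' hne
    have hyy' : e ⟨C, hC⟩ ≠ e ⟨C', hC'⟩ := by
      intro h
      exact hne (congrArg Subtype.val (e.injective h))
    have := congrFun (congrFun hMtM (e ⟨C, hC⟩)) (e ⟨C', hC'⟩)
    simp only [Matrix.mul_apply, Matrix.transpose_apply, hM, Matrix.of_apply,
      Equiv.symm_apply_apply, hA, Matrix.add_apply, Matrix.smul_apply,
      Matrix.one_apply_ne hyy', smul_eq_mul, mul_zero, hJ, mul_one, zero_add] at this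
    have heq : ∀ x : P, (if x ∈ C then (1:ℚ) else 0) * (if x ∈ C' then (1:ℚ) else 0)
        = if x ∈ C ∩ C' then (1:ℚ) else 0 := by
      intro x
      simp only [Finset.mem_inter]
      split_ifs with h1 h2 h3 <;> simp_all
    rw [Finset.sum_congr rfl (fun x _ => heq x), Finset.sum_boole] at this
    have : ((Finset.univ.filter fun x => x ∈ C ∩ C').card : ℚ) = (lam : ℚ) := this
    rw [Finset.filter_mem_eq_inter, Finset.univ_inter] at this
    exact_mod_cast this
  · -- fixed points = fixed blocks
    intro g hg
    -- permutation of blocks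
    have hinj : Function.Injective (fun C : {C // C ∈ 𝓑} => (⟨g • C.1, hg C.1 C.2⟩ : {C // C ∈ 𝓑})) := by
      intro C D h
      have : g • C.1 = g • D.1 := congrArg Subtype.val h
      ext1
      exact smul_left_cancel g this
    set q : {C // C ∈ 𝓑} ≃ {C // C ∈ 𝓑} :=
      Equiv.ofBijective _ (Finite.injective_iff_bijective.mp hinj) with hq
    have hqval : ∀ C : {C // C ∈ 𝓑}, (q C).1 = g • C.1 := fun C => rfl
    set σ : Equiv.Perm P := e.permCongr q with hσ
    have hσval : ∀ y : P, e.symm (σ y) = q (e.symm y) := by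
      intro y
      rw [hσ]
      simp [Equiv.permCongr_apply]
    set Pg : Matrix P P ℚ := Matrix.of fun x y => if g y = x then 1 else 0 with hPg
    set Qg : Matrix P P ℚ := Matrix.of fun y y' => if σ y' = y then 1 else 0 with hQg
    have hPM : Pg * M = M * Qg := by
      ext x y
      simp only [Matrix.mul_apply, hPg, hQg, hM, Matrix.of_apply]
      have hL : ∀ z : P, (if g z = x then (1:ℚ) else 0) * (if z ∈ (e.symm y : Finset P) then (1:ℚ) else 0)
          = if z = g⁻¹ x then (if z ∈ (e.symm y : Finset P) then (1:ℚ) else 0) else 0 := by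
        intro z
        have : g z = x ↔ z = g⁻¹ x := by
          constructor
          · intro h; simp [← h]
          · intro h; simp [h]
        simp only [this]
        split_ifs <;> simp
      rw [Finset.sum_congr rfl (fun z _ => hL z), Finset.sum_ite_eq' Finset.univ (g⁻¹ x)
        (fun z => if z ∈ (e.symm y : Finset P) then (1:ℚ) else 0)]
      simp only [Finset.mem_univ, if_true]
      have hR : ∀ z : P, (if x ∈ (e.symm z : Finset P) then (1:ℚ) else 0) * (if σ y = z then (1:ℚ) else 0)
          = if z = σ y then (if x ∈ (e.symm z : Finset P) then (1:ℚ) else 0) else 0 := by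
        intro z
        have : σ y = z ↔ z = σ y := eq_comm
        simp only [this]
        split_ifs <;> simp
      rw [Finset.sum_congr rfl (fun z _ => hR z), Finset.sum_ite_eq' Finset.univ (σ y)
        (fun z => if x ∈ (e.symm z : Finset P) then (1:ℚ) else 0)]
      simp only [Finset.mem_univ, if_true]
      rw [hσval y]
      have : (q (e.symm y) : Finset P) = g • (e.symm y : Finset P) := hqval _
      rw [this]
      have hmem : g⁻¹ x ∈ (e.symm y : Finset P) ↔ x ∈ g • (e.symm y : Finset P) := by
        constructor
        · intro h
          refine Finset.mem_smul_finset.mpr ⟨g⁻¹ x, h, ?_⟩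
          simp
        · intro h
          obtain ⟨b, hb, hbe⟩ := Finset.mem_smul_finset.mp h
          have : b = g⁻¹ x := by
            have : g b = x := hbe
            simp [← this]
          rwa [← this]
      by_cases h : g⁻¹ x ∈ (e.symm y : Finset P)
      · rw [if_pos h, if_pos (hmem.mp h)]
      · rw [if_neg h, if_neg (fun hh => h (hmem.mpr hh))]
    have hPgQg : Pg = M * Qg * ⅟M := by
      rw [← hPM, Matrix.mul_assoc, mul_invOf_self, Matrix.mul_one]
    have htr : Pg.trace = Qg.trace := by
      rw [hPgQg, Matrix.trace_mul_comm, ← Matrix.mul_assoc, invOf_mul_self,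
        Matrix.one_mul]
    have htrP : Pg.trace = ((Finset.univ.filter fun x => g x = x).card : ℚ) := by
      rw [Matrix.trace]
      simp only [Matrix.diag, hPg, Matrix.of_apply]
      rw [Finset.sum_boole]
    have htrQ : Qg.trace = ((𝓑.filter fun C => g • C = C).card : ℚ) := by
      rw [Matrix.trace]
      simp only [Matrix.diag, hQg, Matrix.of_apply]
      rw [Finset.sum_boole]
      congr 1
      refine Finset.card_bij (fun y _ => (e.symm y : Finset P)) ?_ ?_ ?_
      · intro y hy
        have hfix : σ y = y := by simpa using (Finset.mem_filter.mp hy).2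
        refine Finset.mem_filter.mpr ⟨(e.symm y).2, ?_⟩
        have : q (e.symm y) = e.symm y := by rw [← hσval y, hfix]
        have h2 := hqval (e.symm y)
        rw [this] at h2
        exact h2.symm
      · intro y1 h1 y2 h2 hval
        exact e.symm.injective (Subtype.ext hval)
      · intro C hC
        obtain ⟨hC𝓑, hCfix⟩ := Finset.mem_filter.mp hC
        refine ⟨e ⟨C, hC𝓑⟩, ?_, ?_⟩
        · refine Finset.mem_filter.mpr ⟨Finset.mem_univ _, ?_⟩
          have : q ⟨C, hC𝓑⟩ = ⟨C, hC𝓑⟩ := by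
            ext1
            rw [hqval]
            exact hCfix
          have h2 : e.symm (σ (e ⟨C, hC𝓑⟩)) = e.symm (e ⟨C, hC𝓑⟩) := by
            rw [hσval, Equiv.symm_apply_apply, this]
          exact e.symm.injective h2
        · simp
    have : ((Finset.univ.filter fun x => g x = x).card : ℚ)
        = ((𝓑.filter fun C => g • C = C).card : ℚ) := by
      rw [← htrP, ← htrQ, htr]
    exact_mod_cast this


variable {G : Subgroup (Equiv.Perm P)} {B : Finset P}

/-- membership in a translated finset -/
lemma mem_smul_iff (g : G) (s : Finset P) (a : P) : a ∈ g • s ↔ g⁻¹ • a ∈ s := by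
  constructor
  · intro h
    obtain ⟨b, hb, rfl⟩ := Finset.mem_smul_finset.mp h
    simpa using hb
  · intro h
    have := Finset.smul_mem_smul_finset (a := g) h
    simpa using this

section L1

variable (hD : IsDesign 𝓑 v k lam) (hflag : IsFlagTransitive G 𝓑) (hB : B ∈ 𝓑)
variable (hab : ∀ g : G, g • B = B → ∀ h : G, h • B = B → ∀ a ∈ B, g • (h • a) = h • (g • a))

include hD hflag hB hab in
/-- L1: on every block, block-stabilizing elements commute pointwise. -/
lemma comm_on_block : ∀ C ∈ 𝓑, ∀ g h : G, g • C = C → h • C = C →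
    ∀ a ∈ C, g • (h • a) = h • (g • a) := by
  intro C hC g h hg hh a ha
  have hBne : B.Nonempty := by
    rw [← Finset.card_pos, hD.blocks_card B hB]
    have := hD.two_lt_k; omega
  obtain ⟨b, hb⟩ := hBne
  have hCne : C.Nonempty := ⟨a, ha⟩
  obtain ⟨c0, hc0⟩ := hCne
  obtain ⟨τ, hτG, hτb, hτB⟩ := hflag B hB C hC b hb c0 hc0
  set τ' : G := ⟨τ, hτG⟩ with hτ'
  have hτ'B : τ' • B = C := hτB
  have key : ∀ u : G, u • C = C → (τ'⁻¹ * u * τ') • B = B := by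
    intro u hu
    rw [mul_smul, mul_smul, hτ'B, hu, ← hτ'B, inv_smul_smul]
  have hmem : τ'⁻¹ • a ∈ B := by
    rw [← hτ'B] at ha
    exact (mem_smul_iff τ' B a).mp ha
  have := hab (τ'⁻¹ * g * τ') (key g hg) (τ'⁻¹ * h * τ') (key h hh) (τ'⁻¹ • a) hmem
  have h2 : (τ'⁻¹ * g * τ') • ((τ'⁻¹ * h * τ') • (τ'⁻¹ • a)) = τ'⁻¹ • (g • (h • a)) := by
    simp only [mul_smul, inv_smul_smul, smul_inv_smul]
  have h3 : (τ'⁻¹ * h * τ') • ((τ'⁻¹ * g * τ') • (τ'⁻¹ • a)) = τ'⁻¹ • (h • (g • a)) := by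
    simp only [mul_smul, inv_smul_smul, smul_inv_smul]
  rw [h2, h3] at this
  exact smul_left_cancel _ this

include hflag in
/-- L2: the stabilizer of a block acts transitively on it. -/
lemma block_trans : ∀ C ∈ 𝓑, ∀ c1 ∈ C, ∀ c2 ∈ C, ∃ σ : G, σ • C = C ∧ σ • c1 = c2 := by
  intro C hC c1 h1 c2 h2
  obtain ⟨σ, hσG, hσ1, hσC⟩ := hflag C hC C hC c1 h1 c2 h2
  exact ⟨⟨σ, hσG⟩, hσC, hσ1⟩

include hD hflag hB hab in
/-- L3: an element stabilizing a block and fixing one of its points fixes it pointwise. -/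
lemma pointwise_of_fix : ∀ C ∈ 𝓑, ∀ g : G, g • C = C → ∀ a ∈ C, g • a = a →
    ∀ c ∈ C, g • c = c := by
  intro C hC g hg a ha hfix c hc
  obtain ⟨σ, hσC, hσa⟩ := block_trans hflag C hC a ha c hc
  have hcomm := comm_on_block hD hflag hB hab C hC g σ hg hσC a ha
  rw [hfix] at hcomm
  rw [← hσa]
  exact hcomm

include hD hflag hB hab in
/-- L4: the pointwise stabilizer of any block is trivial. -/
lemma pointwise_trivial (hsym : 𝓑.card = v) (hAut : IsAutGroup G 𝓑) :
    ∀ C ∈ 𝓑, ∀ g : G, g • C = C → (∀ a ∈ C, g • a = a) → g = 1 := by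
  intro C hC g hgC hfix
  obtain ⟨hinter, htrace⟩ := matrix_key hD hsym
  set gp : Equiv.Perm P := (g : Equiv.Perm P) with hgp
  have hgmap : ∀ C' ∈ 𝓑, gp • C' ∈ 𝓑 := fun C' hC' => hAut gp g.2 C' hC'
  set F : Finset P := Finset.univ.filter (fun x => gp x = x) with hF
  set 𝓕 : Finset (Finset P) := 𝓑.filter (fun C' => gp • C' = C') with h𝓕
  have hcards : F.card = 𝓕.card := htrace gp hgmap
  have hgpsmul : ∀ (s : Finset P), gp • s = g • s := fun s => rfl
  have hgppt : ∀ (a : P), gp a = g • a := fun a => rfl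
  have hCF : C ⊆ F := by
    intro a ha
    rw [hF, Finset.mem_filter]
    exact ⟨Finset.mem_univ a, by rw [hgppt]; exact hfix a ha⟩
  have hC𝓕 : C ∈ 𝓕 := by
    rw [h𝓕, Finset.mem_filter]
    exact ⟨hC, by rw [hgpsmul]; exact hgC⟩
  -- every fixed block is contained in F
  have claim1 : ∀ C' ∈ 𝓕, C' ⊆ F := by
    intro C' hC'
    obtain ⟨hC'𝓑, hC'fix⟩ := Finset.mem_filter.mp hC'
    by_cases hCC' : C' = C
    · rw [hCC']; exact hCF
    · have hint : (C ∩ C').card = lam := hinter C hC C' hC'𝓑 (fun h => hCC' h.symm)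
      have : (C ∩ C').Nonempty := by
        rw [← Finset.card_pos, hint]; exact hD.lam_pos
      obtain ⟨a, ha⟩ := this
      have haC : a ∈ C := (Finset.mem_inter.mp ha).1
      have haC' : a ∈ C' := (Finset.mem_inter.mp ha).2
      have hfixa : g • a = a := hfix a haC
      have hgC' : g • C' = C' := by rw [← hgpsmul]; exact hC'fix
      have := pointwise_of_fix hD hflag hB hab C' hC'𝓑 g hgC' a haC' hfixa
      intro z hz
      rw [hF, Finset.mem_filter]
      exact ⟨Finset.mem_univ z, by rw [hgppt]; exact this z hz⟩
  -- degree count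
  have hdeg_le : ∀ x : P, (𝓕.filter (fun C' => x ∈ C')).card ≤ k := by
    intro x
    have hsub : 𝓕.filter (fun C' => x ∈ C') ⊆ 𝓑.filter (fun C' => x ∈ C') :=
      Finset.filter_subset_filter _ (Finset.filter_subset _ _)
    calc (𝓕.filter (fun C' => x ∈ C')).card ≤ (𝓑.filter (fun C' => x ∈ C')).card :=
          Finset.card_le_card hsub
      _ = k := r_eq hD hsym x
  have hcount : ∑ x ∈ F, (𝓕.filter (fun C' => x ∈ C')).card = 𝓕.card * k := by
    have h1 : ∑ x ∈ F, (𝓕.filter (fun C' => x ∈ C')).card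
        = ∑ x ∈ F, ∑ C' ∈ 𝓕, (if x ∈ C' then 1 else 0) := by
      refine Finset.sum_congr rfl fun x _ => ?_
      rw [Finset.card_filter]
    rw [h1, Finset.sum_comm]
    have h2 : ∀ C' ∈ 𝓕, (∑ x ∈ F, if x ∈ C' then 1 else 0) = k := by
      intro C' hC'
      rw [← Finset.card_filter]
      have : F.filter (fun x => x ∈ C') = C' := by
        apply Finset.Subset.antisymm
        · intro x hx; exact (Finset.mem_filter.mp hx).2
        · intro x hx; exact Finset.mem_filter.mpr ⟨claim1 C' hC' hx, hx⟩
      rw [this]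
      exact hD.blocks_card C' (Finset.mem_filter.mp hC').1
    rw [Finset.sum_congr rfl h2, Finset.sum_const, smul_eq_mul]
  -- each degree is exactly k
  have hdeg : ∀ x ∈ F, (𝓕.filter (fun C' => x ∈ C')).card = k := by
    by_contra hcon
    push_neg at hcon
    obtain ⟨x0, hx0F, hx0⟩ := hcon
    have hlt : ∑ x ∈ F, (𝓕.filter (fun C' => x ∈ C')).card < ∑ x ∈ F, k := by
      apply Finset.sum_lt_sum (fun i _ => hdeg_le i)
      exact ⟨x0, hx0F, lt_of_le_of_ne (hdeg_le x0) hx0⟩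
    rw [hcount, Finset.sum_const, smul_eq_mul, hcards] at hlt
    exact lt_irrefl _ hlt
  -- closure: every block through a point of F is in 𝓕 hence inside F
  have hclose : ∀ x ∈ F, ∀ C' ∈ 𝓑, x ∈ C' → C' ⊆ F := by
    intro x hxF C' hC'𝓑 hxC'
    have hsub : 𝓕.filter (fun C'' => x ∈ C'') ⊆ 𝓑.filter (fun C'' => x ∈ C'') :=
      Finset.filter_subset_filter _ (Finset.filter_subset _ _)
    have : 𝓕.filter (fun C'' => x ∈ C'') = 𝓑.filter (fun C'' => x ∈ C'') := by
      apply Finset.eq_of_subset_of_card_le hsub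
      rw [r_eq hD hsym x, hdeg x hxF]
    have hC'𝓕 : C' ∈ 𝓕 := by
      have : C' ∈ 𝓕.filter (fun C'' => x ∈ C'') := by
        rw [this]; exact Finset.mem_filter.mpr ⟨hC'𝓑, hxC'⟩
      exact (Finset.mem_filter.mp this).1
    exact claim1 C' hC'𝓕
  -- conclude F = univ
  have hFuniv : ∀ y : P, y ∈ F := by
    by_contra hcon
    push_neg at hcon
    obtain ⟨y, hy⟩ := hcon
    have hCne : C.Nonempty := by
      rw [← Finset.card_pos, hD.blocks_card C hC]
      have := hD.two_lt_k; omega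
    obtain ⟨a, haC⟩ := hCne
    have haF : a ∈ F := hCF haC
    have hay : a ≠ y := by
      intro h; rw [h] at haF; exact hy haF
    have hlam := hD.pair_blocks a y hay
    have : (𝓑.filter fun C' => a ∈ C' ∧ y ∈ C').Nonempty := by
      rw [← Finset.card_pos, hlam]; exact hD.lam_pos
    obtain ⟨C', hC'⟩ := this
    obtain ⟨hC'𝓑, haC', hyC'⟩ := Finset.mem_filter.mp hC'
    exact hy (hclose a haF C' hC'𝓑 haC' hyC')
  -- g = 1
  have : gp = 1 := by
    ext z
    have := hFuniv z
    rw [hF, Finset.mem_filter] at this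
    exact this.2
  ext z
  have : gp z = z := by rw [this]; rfl
  exact this

include hD hflag hB hab in
/-- L5: an element stabilizing a block and fixing one of its points is trivial. -/
lemma flag_stab_trivial (hsym : 𝓑.card = v) (hAut : IsAutGroup G 𝓑) :
    ∀ C ∈ 𝓑, ∀ g : G, g • C = C → ∀ a ∈ C, g • a = a → g = 1 := by
  intro C hC g hgC a ha hfix
  exact pointwise_trivial hD hflag hB hab hsym hAut C hC g hgC
    (pointwise_of_fix hD hflag hB hab C hC g hgC a ha hfix)

end L1

/-- A finite group acting freely on an invariant finite set: the group order divides the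
cardinality. -/
lemma free_card_dvd {Gamma X : Type*} [Group Gamma] [Fintype Gamma] [DecidableEq X]
    [MulAction Gamma X] :
    ∀ T : Finset X, (∀ γ : Gamma, ∀ t ∈ T, γ • t ∈ T) →
    (∀ γ : Gamma, ∀ t ∈ T, γ • t = t → γ = 1) →
    Fintype.card Gamma ∣ T.card := by
  intro T
  induction T using Finset.strongInduction with
  | _ T ih =>
    intro hinv hfree
    rcases T.eq_empty_or_nonempty with rfl | ⟨t0, ht0⟩
    · simp
    · set O : Finset X := Finset.univ.image (fun γ : Gamma => γ • t0) with hO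
      have hOsub : O ⊆ T := by
        intro x hx
        obtain ⟨γ, _, rfl⟩ := Finset.mem_image.mp hx
        exact hinv γ t0 ht0
      have hinj : Function.Injective (fun γ : Gamma => γ • t0) := by
        intro γ1 γ2 h
        have h2 : (γ2⁻¹ * γ1) • t0 = t0 := by
          rw [mul_smul]
          simp only at h
          rw [h, inv_smul_smul]
        exact (inv_mul_eq_one.mp (hfree _ t0 ht0 h2)).symm
      have hOcard : O.card = Fintype.card Gamma := by
        rw [hO, Finset.card_image_of_injective _ hinj, Finset.card_univ]
      have hOne : O.Nonempty := ⟨t0, Finset.mem_image.mpr ⟨1, Finset.mem_univ 1, one_smul _ _⟩⟩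
      have hss : T \ O ⊂ T := Finset.sdiff_ssubset hOsub hOne
      have hinv2 : ∀ γ : Gamma, ∀ t ∈ T \ O, γ • t ∈ T \ O := by
        intro γ t ht
        obtain ⟨htT, htO⟩ := Finset.mem_sdiff.mp ht
        refine Finset.mem_sdiff.mpr ⟨hinv γ t htT, ?_⟩
        intro hmem
        obtain ⟨δ, _, hδ⟩ := Finset.mem_image.mp hmem
        apply htO
        refine Finset.mem_image.mpr ⟨γ⁻¹ * δ, Finset.mem_univ _, ?_⟩
        rw [mul_smul, hδ, inv_smul_smul]
      have hfree2 : ∀ γ : Gamma, ∀ t ∈ T \ O, γ • t = t → γ = 1 := by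
        intro γ t ht
        exact hfree γ t (Finset.mem_sdiff.mp ht).1
      have hdvd := ih (T \ O) hss hinv2 hfree2
      have hcardeq : (T \ O).card + O.card = T.card := Finset.card_sdiff_add_card_eq_card hOsub
      rw [← hcardeq, hOcard]
      exact Nat.dvd_add hdvd dvd_rfl

/-- A finite group acting freely and transitively on a nonempty finite set has the same
cardinality. -/
lemma free_trans_card_eq {Gamma X : Type*} [Group Gamma] [Fintype Gamma] [DecidableEq X]
    [MulAction Gamma X] (T : Finset X) (t0 : X) (ht0 : t0 ∈ T)
    (hinv : ∀ γ : Gamma, ∀ t ∈ T, γ • t ∈ T)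
    (htrans : ∀ t ∈ T, ∃ γ : Gamma, γ • t0 = t)
    (hfree : ∀ γ : Gamma, γ • t0 = t0 → γ = 1) :
    Fintype.card Gamma = T.card := by
  classical
  have hinj : Function.Injective (fun γ : Gamma => γ • t0) := by
    intro γ1 γ2 h
    have h2 : (γ2⁻¹ * γ1) • t0 = t0 := by
      rw [mul_smul]
      simp only at h
      rw [h, inv_smul_smul]
    exact (inv_mul_eq_one.mp (hfree _ h2)).symm
  have himg : Finset.univ.image (fun γ : Gamma => γ • t0) = T := by
    apply Finset.Subset.antisymm
    · intro x hx
      obtain ⟨γ, _, rfl⟩ := Finset.mem_image.mp hx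
      exact hinv γ t0 ht0
    · intro t ht
      obtain ⟨γ, hγ⟩ := htrans t ht
      exact Finset.mem_image.mpr ⟨γ, Finset.mem_univ _, hγ⟩
  rw [← himg, Finset.card_image_of_injective _ hinj, Finset.card_univ]




end DesignAux

open DesignAux

/-- **Proposition 5.1.** If `G` is a flag-transitive automorphism group of a symmetric
design and the induced permutation group `G_B^B` is abelian, then `G_B` is faithful on
`B` and `G_B = G_x` for some point `x ∉ B`. -/
theorem stmt_11 (𝓑 : Finset (Finset P)) (v k lam : ℕ)
    (hD : IsDesign 𝓑 v k lam) (hsym : 𝓑.card = v)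
    (G : Subgroup (Equiv.Perm P)) (hAut : IsAutGroup G 𝓑)
    (hflag : IsFlagTransitive G 𝓑)
    (B : Finset P) (hB : B ∈ 𝓑)
    (hab : ∀ g : G, g • B = B → ∀ h : G, h • B = B → ∀ a ∈ B, g • (h • a) = h • (g • a)) :
    (∀ g : G, g • B = B → (∀ a ∈ B, g • a = a) → g = 1) ∧
    ∃ x : P, x ∉ B ∧ MulAction.stabilizer G B = MulAction.stabilizer G x := by
  classical
  have hL4 := pointwise_trivial hD hflag hB hab hsym hAut
  have hL5 := flag_stab_trivial hD hflag hB hab hsym hAut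
  refine ⟨hL4 B hB, ?_⟩
  -- numerical facts
  have hk3 : 2 < k := hD.two_lt_k
  have hvk : k + 2 ≤ v := v_ge hD
  have hlam0 : lam ≠ 0 := by have := hD.lam_pos; omega
  have hk0 : k ≠ 0 := by omega
  have hcardP : Fintype.card P = v := hD.card_points
  have hlamk : lam < k := lam_lt_k hD hsym
  -- choose a good prime p
  have hndvd : ¬ k ∣ lam := fun h => by
    have := Nat.le_of_dvd hD.lam_pos h; omega
  have hex : ∃ p : ℕ, lam.factorization p < k.factorization p := by
    by_contra hcon
    push_neg at hcon
    exact hndvd ((Nat.factorization_le_iff_dvd hk0 hlam0).mp fun p => hcon p)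
  obtain ⟨p, hpfact⟩ := hex
  have hp : p.Prime := by
    by_contra hnp
    rw [Nat.factorization_eq_zero_of_not_prime k hnp] at hpfact
    omega
  haveI : Fact p.Prime := ⟨hp⟩
  set α : ℕ := k.factorization p with hα
  have hα1 : 1 ≤ α := by omega
  have hpdvdk : p ∣ k := by
    rw [← pow_one p]
    exact (Nat.Prime.pow_dvd_iff_le_factorization hp hk0).mpr hα1
  have hpα : ¬ (p ^ α ∣ lam) := by
    intro h
    have := (Nat.Prime.pow_dvd_iff_le_factorization hp hlam0).mp h
    omega
  -- p divides v - 1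
  have hpv1 : p ∣ v - 1 := by
    have hkey := lam_eq hD hsym
    have hv1 : v - 1 ≠ 0 := by omega
    have hk1 : k - 1 ≠ 0 := by omega
    have hfac : ((v-1) * lam).factorization p = (k * (k-1)).factorization p := by rw [hkey]
    rw [Nat.factorization_mul hv1 hlam0, Nat.factorization_mul hk0 hk1] at hfac
    simp only [Finsupp.add_apply] at hfac
    have hk1p : (k-1).factorization p = 0 := by
      apply Nat.factorization_eq_zero_of_not_dvd
      intro hdvd
      have h1 : p ∣ k - (k-1) := Nat.dvd_sub hpdvdk hdvd
      have h2 : k - (k-1) = 1 := by omega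
      rw [h2] at h1
      have h3 := Nat.le_of_dvd one_pos h1
      have := hp.one_lt
      omega
    have hpos : 1 ≤ (v-1).factorization p := by omega
    rw [← pow_one p]
    exact (Nat.Prime.pow_dvd_iff_le_factorization hp hv1).mpr hpos
  -- the stabilizer H of the block B
  set H : Subgroup G := MulAction.stabilizer G B with hH
  haveI : Fintype G := Fintype.ofFinite _
  haveI : Fintype H := Fintype.ofFinite _
  have hBne : B.Nonempty := by
    rw [← Finset.card_pos, hD.blocks_card B hB]; omega
  obtain ⟨a0, ha0⟩ := hBne
  -- |H| = k
  have hsmulH : ∀ (γ : H) (z : P), γ • z = (γ : G) • z := fun γ z => rfl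
  have hsmulHF : ∀ (γ : H) (s : Finset P), γ • s = (γ : G) • s := fun γ s => rfl
  have hHcard : Fintype.card H = k := by
    have := free_trans_card_eq (Gamma := H) (X := P) B a0 ha0
      (fun γ t ht => by
        rw [hsmulH]
        have : (γ : G) • t ∈ (γ : G) • B := Finset.smul_mem_smul_finset ht
        rwa [γ.2] at this)
      (fun t ht => by
        obtain ⟨σ, hσB, hσa⟩ := block_trans hflag B hB a0 ha0 t ht
        exact ⟨⟨σ, hσB⟩, hσa⟩)
      (fun γ hγ => by
        exact Subtype.ext (hL5 B hB (γ : G) γ.2 a0 ha0 hγ))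
    rw [this, hD.blocks_card B hB]
  -- Sylow p-subgroup of H
  obtain ⟨S⟩ := (Sylow.nonempty : Nonempty (Sylow p H))
  haveI : Fintype (S : Subgroup H) := Fintype.ofFinite _
  have hScard : Nat.card (S : Subgroup H) = p ^ α := by
    rw [Sylow.card_eq_multiplicity, Nat.card_eq_fintype_card, hHcard]
  have hsmulS : ∀ (s : (S : Subgroup H)) (z : P), s • z = ((s : H) : G) • z := fun s z => rfl
  have hSG : ∀ s : (S : Subgroup H), ((s : H) : G) ∈ H := fun s => (s : H).2
  have hS1 : ∀ s : (S : Subgroup H), ((s : H) : G) = 1 → s = 1 := by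
    intro s h
    exact Subtype.ext (Subtype.ext h)
  -- fixed points of S
  set Ω : Set P := MulAction.fixedPoints (S : Subgroup H) P with hΩ
  haveI : Fintype Ω := Fintype.ofFinite _
  have hmod : Nat.card P ≡ Nat.card Ω [MOD p] :=
    IsPGroup.card_modEq_card_fixedPoints (S.isPGroup') P
  -- Ω is disjoint from B
  have hSne : ∃ s : (S : Subgroup H), s ≠ 1 := by
    have h1 : 1 < Nat.card (S : Subgroup H) := by
      rw [hScard]
      exact Nat.one_lt_pow (by omega) hp.one_lt
    rw [Nat.card_eq_fintype_card] at h1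
    exact Fintype.exists_ne_of_one_lt_card h1 1
  have hΩB : ∀ x ∈ Ω, x ∉ B := by
    intro x hx hxB
    obtain ⟨s, hs⟩ := hSne
    have hfix : s • x = x := hx s
    rw [hsmulS] at hfix
    exact hs (hS1 s (hL5 B hB _ (hSG s) x hxB hfix))
  -- Ω is nonempty
  have hΩne : Nat.card Ω ≠ 0 := by
    intro h0
    rw [Nat.card_eq_fintype_card, hcardP, h0] at hmod
    have hdvdv : p ∣ v := (Nat.modEq_zero_iff_dvd).mp hmod
    have : p ∣ 1 := by
      have := Nat.dvd_sub hdvdv hpv1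
      simpa [Nat.sub_sub_self (by omega : 1 ≤ v)] using this
    have hp1 := Nat.dvd_one.mp this
    have := hp.one_lt
    omega
  have hΩpos : 0 < Nat.card Ω := Nat.pos_of_ne_zero hΩne
  haveI hΩnonempty : Nonempty Ω := (Nat.card_pos_iff.mp hΩpos).1
  obtain ⟨x, hx⟩ := hΩnonempty
  -- Ω is a singleton: any two fixed points would force p^α ∣ lam
  have hsing : ∀ y ∈ Ω, y = x := by
    intro y hy
    by_contra hxy
    -- the lam blocks through x and y
    set Λ : Finset (Finset P) := 𝓑.filter (fun C => x ∈ C ∧ y ∈ C) with hΛ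
    have hΛcard : Λ.card = lam := hD.pair_blocks x y (fun h => hxy h.symm)
    have hdvd : Fintype.card (S : Subgroup H) ∣ Λ.card := by
      apply free_card_dvd (Gamma := (S : Subgroup H)) (X := Finset P) Λ
      · intro s C hC
        obtain ⟨hC𝓑, hxC, hyC⟩ := Finset.mem_filter.mp hC
        have hmem : (((s : H) : G) : Equiv.Perm P) • C ∈ 𝓑 :=
          hAut _ ((s : H) : G).2 C hC𝓑
        have hsmul : s • C = (((s : H) : G) : Equiv.Perm P) • C := rfl
        refine Finset.mem_filter.mpr ⟨by rw [hsmul]; exact hmem, ?_, ?_⟩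
        · have : s • x ∈ s • C := Finset.smul_mem_smul_finset hxC
          rwa [hx s] at this
        · have : s • y ∈ s • C := Finset.smul_mem_smul_finset hyC
          rwa [hy s] at this
      · intro s C hC hfix
        obtain ⟨hC𝓑, hxC, _⟩ := Finset.mem_filter.mp hC
        have hxfix : ((s : H) : G) • x = x := hx s
        have hCfix : ((s : H) : G) • C = C := hfix
        exact hS1 s (hL5 C hC𝓑 _ hCfix x hxC hxfix)
    rw [hΛcard, ← Nat.card_eq_fintype_card, hScard] at hdvd
    exact hpα hdvd
  -- H is abelian
  have habel : ∀ g h : G, g ∈ H → h ∈ H → g * h = h * g := by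
    intro g h hg hh
    have hgB : g • B = B := hg
    have hhB : h • B = B := hh
    set u : G := (h * g)⁻¹ * (g * h) with hu
    have hgh : (g * h) • B = B := by rw [mul_smul, hhB, hgB]
    have hhg : (h * g) • B = B := by rw [mul_smul, hgB, hhB]
    have huB : u • B = B := by
      rw [hu, mul_smul, hgh, inv_smul_eq_iff, hhg]
    have hufix : ∀ a ∈ B, u • a = a := by
      intro a ha
      have hcomm := hab g hgB h hhB a ha
      rw [hu, mul_smul, inv_smul_eq_iff, mul_smul, mul_smul, hcomm]
    have := hL4 B hB u huB hufix
    rw [hu, inv_mul_eq_one] at this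
    exact this.symm
  -- H fixes x
  have hHfix : ∀ g : G, g ∈ H → g • x = x := by
    intro g hg
    have : g • x ∈ Ω := by
      intro s
      have hcomm : ((s : H) : G) * g = g * ((s : H) : G) := habel _ _ (hSG s) hg
      have : s • (g • x) = (((s : H) : G) * g) • x := by rw [mul_smul]; rfl
      rw [this, hcomm, mul_smul]
      have hxfix : ((s : H) : G) • x = x := hx s
      rw [hxfix]
    exact hsing _ this
  have hle : H ≤ MulAction.stabilizer G x := fun g hg => hHfix g hg
  -- |stabilizer x| = k via the k blocks through x
  haveI : Fintype (MulAction.stabilizer G x) := Fintype.ofFinite _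
  have hΛx : (𝓑.filter fun C => x ∈ C).card = k := r_eq hD hsym x
  have hΛxne : (𝓑.filter fun C => x ∈ C).Nonempty := by
    rw [← Finset.card_pos, hΛx]; omega
  obtain ⟨C0, hC0⟩ := hΛxne
  obtain ⟨hC0𝓑, hxC0⟩ := Finset.mem_filter.mp hC0
  have hstabxcard : Fintype.card (MulAction.stabilizer G x) = k := by
    have := free_trans_card_eq (Gamma := MulAction.stabilizer G x) (X := Finset P)
      (𝓑.filter fun C => x ∈ C) C0 hC0
      (fun γ C hC => by
        obtain ⟨hC𝓑, hxC⟩ := Finset.mem_filter.mp hC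
        have hmem : ((γ : G) : Equiv.Perm P) • C ∈ 𝓑 := hAut _ (γ : G).2 C hC𝓑
        have hsmul : γ • C = ((γ : G) : Equiv.Perm P) • C := rfl
        refine Finset.mem_filter.mpr ⟨by rw [hsmul]; exact hmem, ?_⟩
        have : (γ : G) • x ∈ (γ : G) • C := Finset.smul_mem_smul_finset hxC
        rwa [γ.2] at this)
      (fun C hC => by
        obtain ⟨hC𝓑, hxC⟩ := Finset.mem_filter.mp hC
        obtain ⟨σ, hσG, hσx, hσC⟩ := hflag C0 hC0𝓑 C hC𝓑 x hxC0 x hxC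
        exact ⟨⟨⟨σ, hσG⟩, hσx⟩, hσC⟩)
      (fun γ hγ => by
        have h1 : (γ : G) = 1 := hL5 C0 hC0𝓑 (γ : G) hγ x hxC0 (γ.2)
        exact Subtype.ext h1)
    rw [this, hΛx]
  -- conclude
  refine ⟨x, hΩB x hx, ?_⟩
  have hcardle : Nat.card (MulAction.stabilizer G x) ≤ Nat.card H := by
    rw [Nat.card_eq_fintype_card, Nat.card_eq_fintype_card, hstabxcard, hHcard]
  exact Subgroup.eq_of_le_of_card_ge hle hcardle
end
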